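/- arXiv:1502.03379 — 7 statements merged into one kernel-verified Lean document; each statement's English description precedes it below -/
import Mathlib

section
/- In a binary network, every vertex that has a child which is a stable tree vertex is itself stable. (Proposition 1(1)) -/
/-!
Common framework: a binary phylogenetic network is modelled as a directed graph
on an ambient type `V`, given by a vertex set `verts : Set V`, an adjacency
relation `adj : V → V → Prop` (no parallel edges are possible in this model),
and a root vertex `root`.
-/

/-- The outdegree of a vertex `v`: the number of its out-neighbours. -/
noncomputable def outdeg {V : Type*} (adj : V → V → Prop) (v : V) : ℕ :=
  {u | adj v u}.ncard

/-- The indegree of a vertex `v`: the number of its in-neighbours. -/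
noncomputable def indeg {V : Type*} (adj : V → V → Prop) (v : V) : ℕ :=
  {u | adj u v}.ncard

/-- A leaf of the network: a vertex with outdegree 0. -/
def IsLeaf {V : Type*} (verts : Set V) (adj : V → V → Prop) (v : V) : Prop :=
  v ∈ verts ∧ outdeg adj v = 0

/-- A tree vertex: indegree 1 and outdegree 2. -/
def IsTreeVertex {V : Type*} (adj : V → V → Prop) (v : V) : Prop :=
  indeg adj v = 1 ∧ outdeg adj v = 2

/-- A reticulation: indegree 2 and outdegree 1. -/
def IsReticulation {V : Type*} (adj : V → V → Prop) (v : V) : Prop :=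
  indeg adj v = 2 ∧ outdeg adj v = 1

/-- `l` is a directed path from `a` to `b`: a nonempty list of vertices starting
at `a`, ending at `b`, each consecutive pair joined by an edge. -/
def IsPathFromTo {V : Type*} (adj : V → V → Prop) (l : List V) (a b : V) : Prop :=
  l.Chain' adj ∧ l.head? = some a ∧ l.getLast? = some b

/-- A binary phylogenetic network: a finite DAG with a unique root (the only
vertex of indegree 0) of outdegree 2, in which every vertex is reachable from
the root, every leaf has indegree 1, and every other non-root vertex is either
a tree vertex or a reticulation. -/
structure IsBinaryNetwork {V : Type*} (verts : Set V) (adj : V → V → Prop) (root : V) : Prop where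
  finite_verts : verts.Finite
  root_mem : root ∈ verts
  adj_mem : ∀ ⦃u v : V⦄, adj u v → u ∈ verts ∧ v ∈ verts
  acyclic : ∀ v : V, ¬ Relation.TransGen adj v v
  root_indeg : indeg adj root = 0
  root_outdeg : outdeg adj root = 2
  root_unique : ∀ v ∈ verts, indeg adj v = 0 → v = root
  reach : ∀ v ∈ verts, Relation.ReflTransGen adj root v
  leaf_indeg : ∀ v ∈ verts, outdeg adj v = 0 → indeg adj v = 1
  internal_deg : ∀ v ∈ verts, v ≠ root → outdeg adj v ≠ 0 →
      IsTreeVertex adj v ∨ IsReticulation adj v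

/-- `x` is stable: there is a leaf `ℓ` such that `x` lies on every directed
path from the root to `ℓ`. -/
def Stable {V : Type*} (verts : Set V) (adj : V → V → Prop) (root x : V) : Prop :=
  ∃ ℓ, IsLeaf verts adj ℓ ∧ ∀ l : List V, IsPathFromTo adj l root ℓ → x ∈ l

/-- A network is reticulation-visible if every reticulation is stable. -/
def ReticulationVisible {V : Type*} (verts : Set V) (adj : V → V → Prop) (root : V) : Prop :=
  ∀ v ∈ verts, IsReticulation adj v → Stable verts adj root v

/-- A network is nearly stable if every vertex is stable or all of its parents
are stable. -/
def NearlyStable {V : Type*} (verts : Set V) (adj : V → V → Prop) (root : V) : Prop :=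
  ∀ v ∈ verts, Stable verts adj root v ∨ ∀ p : V, adj p v → Stable verts adj root p

/-- In a binary network, every vertex that has a child which is a stable tree
vertex is itself stable. (Proposition 1(1)) -/
theorem stable_of_stable_treeVertex_child {V : Type*} (verts : Set V)
    (adj : V → V → Prop) (root : V) (hN : IsBinaryNetwork verts adj root)
    (x y : V) (hxy : adj x y) (hy : IsTreeVertex adj y)
    (hys : Stable verts adj root y) :
    Stable verts adj root x := by
  have key : ∀ (l : List V) (a : V), l.Chain' adj → l.head? = some a →
      ∀ z ∈ l, z ≠ a → ∃ p ∈ l, adj p z := by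
    intro l
    induction l with
    | nil => intro a _ h; simp at h
    | cons b t ih =>
      intro a hc hh z hz hne
      simp only [List.head?_cons, Option.some.injEq] at hh
      subst hh
      rcases List.mem_cons.mp hz with rfl | hzt
      · exact absurd rfl hne
      · cases t with
        | nil => simp at hzt
        | cons c t' =>
          replace hc := List.isChain_cons_cons.mp hc
          by_cases hzc : z = c
          · subst hzc
            exact ⟨b, List.mem_cons_self, hc.1⟩
          · obtain ⟨p, hp, hadj⟩ := ih c hc.2 rfl z hzt hzc
            exact ⟨p, List.mem_cons_of_mem _ hp, hadj⟩
  obtain ⟨ℓ, hℓ, hall⟩ := hys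
  refine ⟨ℓ, hℓ, fun l hl => ?_⟩
  have hyne : y ≠ root := by
    intro h
    have h1 : indeg adj y = 1 := hy.1
    rw [h, hN.root_indeg] at h1
    exact absurd h1 (by norm_num)
  obtain ⟨hc, hh, _⟩ := id hl
  obtain ⟨p, hp, hadj⟩ := key l root hc hh y (hall l hl) hyne
  obtain ⟨a, ha⟩ := Set.ncard_eq_one.mp hy.1
  have hpx : p = x := by
    have h1 : p ∈ ({a} : Set V) := ha ▸ hadj
    have h2 : x ∈ ({a} : Set V) := ha ▸ hxy
    simp only [Set.mem_singleton_iff] at h1 h2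
    rw [h1, h2]
  exact hpx ▸ hp
end

section
/- In a binary network, a reticulation is stable if and only if its unique child is either a leaf or a stable tree vertex. (Precise form of Proposition 1(2)) -/
section Helpers
variable {V : Type*} {adj : V → V → Prop}

lemma chain'_head_reach : ∀ {l : List V}, l.Chain' adj → ∀ {a x : V},
    l.head? = some a → x ∈ l → Relation.ReflTransGen adj a x
  | [], _, _, _, ha, _ => by simp at ha
  | y :: t, hc, a, x, ha, hx => by
    obtain rfl : y = a := by simpa using ha
    rcases List.mem_cons.mp hx with rfl | hx
    · exact .refl
    · match t, hx, hc with
      | z :: t', hx, hc =>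
        have hc' := List.isChain_cons_cons.mp hc
        exact (chain'_head_reach hc'.2 rfl hx).head hc'.1

lemma chain'_pred : ∀ {l : List V}, l.Chain' adj → ∀ {a x : V},
    l.head? = some a → x ∈ l → x = a ∨ ∃ u ∈ l, adj u x
  | [], _, _, _, ha, _ => by simp at ha
  | y :: t, hc, a, x, ha, hx => by
    obtain rfl : y = a := by simpa using ha
    rcases List.mem_cons.mp hx with rfl | hx
    · exact Or.inl rfl
    · match t, hx, hc with
      | z :: t', hx, hc =>
        have hc' := List.isChain_cons_cons.mp hc
        rcases chain'_pred hc'.2 rfl hx with rfl | ⟨u, hu, hux⟩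
        · exact Or.inr ⟨y, by simp, hc'.1⟩
        · exact Or.inr ⟨u, List.mem_cons_of_mem _ hu, hux⟩

lemma chain'_succ : ∀ {l : List V}, l.Chain' adj → ∀ {b x : V},
    l.getLast? = some b → x ∈ l → x = b ∨ ∃ u ∈ l, adj x u
  | [], _, _, _, hb, hx => by simp at hx
  | [y], _, b, x, hb, hx => by
    obtain rfl : x = y := by simpa using hx
    exact Or.inl (by simpa using hb)
  | y :: z :: t, hc, b, x, hb, hx => by
    have hc' := List.isChain_cons_cons.mp hc
    rcases List.mem_cons.mp hx with rfl | hx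
    · exact Or.inr ⟨z, by simp, hc'.1⟩
    · rw [List.getLast?_cons_cons] at hb
      rcases chain'_succ hc'.2 hb hx with rfl | ⟨u, hu, hxu⟩
      · exact Or.inl rfl
      · exact Or.inr ⟨u, List.mem_cons_of_mem _ hu, hxu⟩

lemma path_suffix {l : List V} {a b x : V} (h : IsPathFromTo adj l a b) (hx : x ∈ l) :
    ∃ t, IsPathFromTo adj (x :: t) x b ∧ ∀ y ∈ x :: t, y ∈ l := by
  obtain ⟨s, t, rfl⟩ := List.append_of_mem hx
  refine ⟨t, ⟨h.1.suffix ⟨s, rfl⟩, rfl, ?_⟩, fun y hy => List.mem_append_right s hy⟩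
  have h2 := h.2.2
  rw [List.getLast?_append] at h2
  have hv : (x :: t).getLast? = some ((x :: t).getLast (by simp)) :=
    List.getLast?_eq_getLast _
  rw [hv] at h2 ⊢
  simpa using h2

lemma path_mem_reach_last {l : List V} {a b x : V} (h : IsPathFromTo adj l a b)
    (hx : x ∈ l) : Relation.ReflTransGen adj x b := by
  obtain ⟨t, ht, _⟩ := path_suffix h hx
  exact chain'_head_reach ht.1 ht.2.1 (List.mem_of_getLast? ht.2.2)

lemma exists_path {a b : V} (h : Relation.ReflTransGen adj a b) :
    ∃ l, IsPathFromTo adj l a b := by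
  induction h using Relation.ReflTransGen.head_induction_on with
  | refl => exact ⟨[b], List.isChain_singleton b, rfl, rfl⟩
  | head hac _ ih =>
    obtain ⟨l, hl⟩ := ih
    match l, hl with
    | [], hl => simp [IsPathFromTo] at hl
    | z :: t, hl => ?_
    rename_i a' c' _ _
    obtain rfl : z = c' := by simpa using hl.2.1
    exact ⟨a' :: z :: t, List.isChain_cons_cons.mpr ⟨hac, hl.1⟩, rfl,
      by rw [List.getLast?_cons_cons]; exact hl.2.2⟩

lemma path_append {l₁ l₂ : List V} {a p c b : V} (h₁ : IsPathFromTo adj l₁ a p)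
    (h₂ : IsPathFromTo adj l₂ c b) (hpc : adj p c) :
    IsPathFromTo adj (l₁ ++ l₂) a b := by
  have hne₁ : l₁ ≠ [] := by rintro rfl; simp [IsPathFromTo] at h₁
  have hne₂ : l₂ ≠ [] := by rintro rfl; simp [IsPathFromTo] at h₂
  refine ⟨List.isChain_append.mpr ⟨h₁.1, h₂.1, ?_⟩, ?_, ?_⟩
  · intro x hx y hy
    rw [h₁.2.2] at hx; rw [h₂.2.1] at hy
    obtain rfl : x = p := by simpa using hx.symm
    obtain rfl : y = c := by simpa using hy.symm
    exact hpc
  · rw [List.head?_append, h₁.2.1]; rfl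
  · rw [List.getLast?_append, h₂.2.2]; rfl

lemma ncard_unique {s : Set V} (h : s.ncard = 1) {a : V} (ha : a ∈ s) :
    ∀ b ∈ s, b = a := by
  obtain ⟨x, rfl⟩ := Set.ncard_eq_one.mp h
  simp_all

end Helpers

/-- In a binary network, a reticulation is stable if and only if its unique
child is either a leaf or a stable tree vertex. (Proposition 1(2)) -/
theorem reticulation_stable_iff {V : Type*} (verts : Set V)
    (adj : V → V → Prop) (root : V) (hN : IsBinaryNetwork verts adj root)
    (r c : V) (hr : IsReticulation adj r) (hrc : adj r c) :
    Stable verts adj root r ↔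
      IsLeaf verts adj c ∨ (IsTreeVertex adj c ∧ Stable verts adj root c) := by
  have hchild : ∀ u, adj r u → u = c := fun u hu => ncard_unique hr.2 hrc u hu
  have hcverts : c ∈ verts := (hN.adj_mem hrc).2
  have hparfin : ∀ v : V, ({u | adj u v} : Set V).Finite := fun v =>
    hN.finite_verts.subset (fun u hu => (hN.adj_mem hu).1)
  have hcroot : c ≠ root := by
    rintro rfl
    have : ({u | adj u c} : Set V) = ∅ :=
      (Set.ncard_eq_zero (hparfin c)).mp hN.root_indeg
    exact absurd hrc (by simpa using Set.eq_empty_iff_forall_notMem.mp this r)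
  constructor
  · rintro ⟨ℓ, hℓ, hstab⟩
    have hrℓ : r ≠ ℓ := by
      rintro rfl
      have h1 := hr.2
      rw [hℓ.2] at h1
      simp at h1
    by_cases hout : outdeg adj c = 0
    · exact Or.inl ⟨hcverts, hout⟩
    rcases hN.internal_deg c hcverts hcroot hout with htv | hret
    · refine Or.inr ⟨htv, ℓ, hℓ, fun l hl => ?_⟩
      have hrl := hstab l hl
      rcases chain'_succ hl.1 hl.2.2 hrl with h | ⟨u, hu, hradj⟩
      · exact absurd h hrℓ
      · rwa [hchild u hradj] at hu
    · exfalso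
      -- c is a reticulation: it has a parent p ≠ r; build a root→ℓ path avoiding r
      obtain ⟨x, y, hxy, hset⟩ := Set.ncard_eq_two.mp hret.1
      have hrmem : r ∈ ({x, y} : Set V) := hset ▸ hrc
      obtain ⟨p, hpc, hpr⟩ : ∃ p, adj p c ∧ p ≠ r := by
        rcases hrmem with rfl | rfl
        · refine ⟨y, ?_, fun h => hxy h.symm⟩
          have hy : y ∈ ({u | adj u c} : Set V) := by rw [hset]; simp
          exact hy
        · refine ⟨x, ?_, hxy⟩
          have hx : x ∈ ({u | adj u c} : Set V) := by rw [hset]; simp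
          exact hx
      obtain ⟨l0, hl0⟩ := exists_path (hN.reach ℓ hℓ.1)
      obtain ⟨t, ht, -⟩ := path_suffix hl0 (hstab l0 hl0)
      match t, ht with
      | [], ht => exact hrℓ (by simpa using ht.2.2)
      | u :: t2, ht => ?_
      have hch := List.isChain_cons_cons.mp ht.1
      obtain rfl : c = u := (hchild u hch.1).symm
      have hpath2 : IsPathFromTo adj (c :: t2) c ℓ :=
        ⟨hch.2, rfl, by rw [← List.getLast?_cons_cons (a := r)]; exact ht.2.2⟩
      have hrnot2 : r ∉ c :: t2 := fun hmem =>
        hN.acyclic r (Relation.TransGen.head' hrc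
          (chain'_head_reach hpath2.1 hpath2.2.1 hmem))
      obtain ⟨l1, hl1⟩ := exists_path (hN.reach p (hN.adj_mem hpc).1)
      have hrnot1 : r ∉ l1 := by
        intro hmem
        rcases chain'_succ hl1.1 hl1.2.2 hmem with rfl | ⟨u', hu', hradj⟩
        · exact hpr rfl
        · obtain rfl : c = u' := (hchild u' hradj).symm
          exact hN.acyclic c
            (Relation.TransGen.tail' (path_mem_reach_last hl1 hu') hpc)
      have hmem := hstab (l1 ++ (c :: t2)) (path_append hl1 hpath2 hpc)
      rcases List.mem_append.mp hmem with h | h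
      · exact hrnot1 h
      · exact hrnot2 h
  · rintro (hcleaf | ⟨htv, ℓ, hℓ, hstab⟩)
    · have hind : indeg adj c = 1 := hN.leaf_indeg c hcleaf.1 hcleaf.2
      have hpar : ∀ u, adj u c → u = r := fun u hu => ncard_unique hind hrc u hu
      refine ⟨c, hcleaf, fun l hl => ?_⟩
      have hcl : c ∈ l := List.mem_of_getLast? hl.2.2
      rcases chain'_pred hl.1 hl.2.1 hcl with h | ⟨u, hu, huc⟩
      · exact absurd h hcroot
      · rwa [hpar u huc] at hu
    · have hpar : ∀ u, adj u c → u = r := fun u hu => ncard_unique htv.1 hrc u hu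
      refine ⟨ℓ, hℓ, fun l hl => ?_⟩
      have hcl : c ∈ l := hstab l hl
      rcases chain'_pred hl.1 hl.2.1 hcl with h | ⟨u, hu, huc⟩
      · exact absurd h hcroot
      · rwa [hpar u huc] at hu
end

section
/- Every binary reticulation-visible network with n leaves has at most 4(n−1) reticulations. (Theorem 1) -/
namespace RVAux

open Relation

variable {V : Type*}

/-! ### Path/list infrastructure -/

lemma rtg_of_chain' {adj : V → V → Prop} :
    ∀ (l : List V) (a b : V), l.Chain' adj → l.head? = some a →
      l.getLast? = some b → Relation.ReflTransGen adj a b := by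
  intro l
  induction l with
  | nil => intro a b _ hh _; simp at hh
  | cons x t ih =>
    intro a b hc hh hl
    simp only [List.head?_cons, Option.some.injEq] at hh
    subst hh
    cases t with
    | nil =>
      simp only [List.getLast?_singleton, Option.some.injEq] at hl
      subst hl; exact .refl
    | cons y s =>
      change List.IsChain adj _ at hc
      rw [List.isChain_cons_cons] at hc
      exact .head hc.1 (ih y b hc.2 rfl (by simpa using hl))

lemma exists_path {adj : V → V → Prop} {a b : V} (h : Relation.ReflTransGen adj a b) :
    ∃ l, IsPathFromTo adj l a b := by
  induction h with
  | refl => exact ⟨[a], List.isChain_singleton a, rfl, rfl⟩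
  | @tail b c hab hbc ih =>
    obtain ⟨l, hc1, hh1, hl1⟩ := ih
    have hne : l ≠ [] := by rintro rfl; simp at hh1
    refine ⟨l ++ [c], ?_, ?_, ?_⟩
    · change List.IsChain adj _
      rw [List.isChain_append]
      refine ⟨hc1, List.isChain_singleton c, ?_⟩
      intro x hx y hy
      rw [hl1] at hx
      simp only [Option.mem_def, Option.some.injEq] at hx
      simp only [List.head?_cons, Option.mem_def, Option.some.injEq] at hy
      subst hx; subst hy; exact hbc
    · rw [List.head?_append, hh1]; rfl
    · rw [List.getLast?_append]; rfl

lemma path_append {adj : V → V → Prop} {l₁ l₂ : List V} {a b c d : V}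
    (h1 : IsPathFromTo adj l₁ a b) (h2 : IsPathFromTo adj l₂ c d) (hbc : adj b c) :
    IsPathFromTo adj (l₁ ++ l₂) a d := by
  obtain ⟨hc1, hh1, hl1⟩ := h1
  obtain ⟨hc2, hh2, hl2⟩ := h2
  refine ⟨?_, ?_, ?_⟩
  · change List.IsChain adj _
    rw [List.isChain_append]
    refine ⟨hc1, hc2, ?_⟩
    intro x hx y hy
    rw [hl1] at hx; rw [hh2] at hy
    simp only [Option.mem_def, Option.some.injEq] at hx hy
    subst hx; subst hy; exact hbc
  · rw [List.head?_append, hh1]; rfl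
  · rw [List.getLast?_append, hl2]; rfl

lemma mem_path_split {adj : V → V → Prop} {l : List V} {a b x : V}
    (h : IsPathFromTo adj l a b) (hx : x ∈ l) :
    Relation.ReflTransGen adj a x ∧ Relation.ReflTransGen adj x b := by
  obtain ⟨hc, hh, hl⟩ := h
  obtain ⟨s, t, rfl⟩ := List.append_of_mem hx
  change List.IsChain adj _ at hc
  rw [List.isChain_append] at hc
  obtain ⟨hcs, hct, hbr⟩ := hc
  have hlast : (s ++ x :: t).getLast? = (x :: t).getLast? := by
    rw [List.getLast?_append]
    cases hxx : (x :: t).getLast? with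
    | none => simp at hxx
    | some w => rfl
  constructor
  · cases s with
    | nil =>
      simp only [List.nil_append, List.head?_cons, Option.some.injEq] at hh
      subst hh; exact .refl
    | cons u s' =>
      simp only [List.cons_append, List.head?_cons, Option.some.injEq] at hh
      subst hh
      cases hw : (u :: s').getLast? with
      | none => simp at hw
      | some w =>
        have h1 : Relation.ReflTransGen adj u w := rtg_of_chain' _ _ _ hcs rfl hw
        have h2 : adj w x := hbr w (by rw [hw]; rfl) x rfl
        exact h1.tail h2
  · exact rtg_of_chain' _ _ _ hct rfl (by rw [← hlast, hl])

/-! ### Basic network facts -/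

variable {verts : Set V} {adj : V → V → Prop} {root : V}

lemma parents_finite (hN : IsBinaryNetwork verts adj root) (v : V) :
    {u | adj u v}.Finite :=
  hN.finite_verts.subset fun _ hu => (hN.adj_mem hu).1

lemma children_finite (hN : IsBinaryNetwork verts adj root) (v : V) :
    {u | adj v u}.Finite :=
  hN.finite_verts.subset fun _ hu => (hN.adj_mem hu).2

lemma rtg_adj_false (hN : IsBinaryNetwork verts adj root) {a b : V}
    (h1 : Relation.ReflTransGen adj a b) (h2 : adj b a) : False :=
  hN.acyclic a (Relation.TransGen.tail' h1 h2)

lemma retic_mem (hN : IsBinaryNetwork verts adj root) {v : V}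
    (hv : IsReticulation adj v) : v ∈ verts := by
  have h2 : {u | adj u v}.ncard = 2 := hv.1
  obtain ⟨u, hu⟩ := Set.nonempty_of_ncard_ne_zero (s := {u | adj u v}) (by simp [h2])
  exact (hN.adj_mem hu).2

lemma root_not_retic (hN : IsBinaryNetwork verts adj root) :
    ¬ IsReticulation adj root := by
  intro h
  have := hN.root_indeg
  rw [h.1] at this
  omega

lemma set_pair_eq {s : Set V} (h2 : s.ncard = 2) {v w : V}
    (hv : v ∈ s) (hw : w ∈ s) (hvw : v ≠ w) : s = {v, w} := by
  obtain ⟨a, b, hab, rfl⟩ := Set.ncard_eq_two.1 h2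
  simp only [Set.mem_insert_iff, Set.mem_singleton_iff] at hv hw
  rcases hv with rfl | rfl <;> rcases hw with rfl | rfl <;> first
    | exact absurd rfl hvw
    | rfl
    | (ext x; simp only [Set.mem_insert_iff, Set.mem_singleton_iff]; tauto)

lemma children_pair (hN : IsBinaryNetwork verts adj root) {v a b : V}
    (hdeg : outdeg adj v = 2) (ha : adj v a) (hb : adj v b) (hab : a ≠ b) :
    {u | adj v u} = {a, b} :=
  set_pair_eq hdeg ha hb hab

lemma parents_pair (hN : IsBinaryNetwork verts adj root) {v : V}
    (hv : IsReticulation adj v) : ∃ a b, a ≠ b ∧ {u | adj u v} = {a, b} := by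
  obtain ⟨a, b, hab, h⟩ := Set.ncard_eq_two.1 hv.1
  exact ⟨a, b, hab, h⟩

lemma retic_child (hN : IsBinaryNetwork verts adj root) {v : V}
    (hv : IsReticulation adj v) : ∃ c, {u | adj v u} = {c} :=
  Set.ncard_eq_one.1 hv.2

lemma leaf_no_child (hN : IsBinaryNetwork verts adj root) {v u : V}
    (hv : IsLeaf verts adj v) (h : adj v u) : False := by
  have h0 : {u | adj v u} = ∅ :=
    (Set.ncard_eq_zero (children_finite hN v)).1 hv.2
  rw [Set.eq_empty_iff_forall_notMem] at h0
  exact h0 u h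

lemma root_no_parent (hN : IsBinaryNetwork verts adj root) {u : V}
    (h : adj u root) : False := by
  have h0 : {u | adj u root} = ∅ :=
    (Set.ncard_eq_zero (parents_finite hN root)).1 hN.root_indeg
  rw [Set.eq_empty_iff_forall_notMem] at h0
  exact h0 u h

lemma indeg_one (hN : IsBinaryNetwork verts adj root) {v : V} (hv : v ∈ verts)
    (hne : v ≠ root) (hnr : ¬ IsReticulation adj v) : indeg adj v = 1 := by
  by_cases h0 : outdeg adj v = 0
  · exact hN.leaf_indeg v hv h0
  · rcases hN.internal_deg v hv hne h0 with ht | hr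
    · exact ht.1
    · exact absurd hr hnr

lemma unique_parent (hN : IsBinaryNetwork verts adj root) {v : V} (hv : v ∈ verts)
    (hne : v ≠ root) (hnr : ¬ IsReticulation adj v) : ∃ p, {u | adj u v} = {p} :=
  Set.ncard_eq_one.1 (indeg_one hN hv hne hnr)

lemma exists_parent (hN : IsBinaryNetwork verts adj root) {v : V} (hv : v ∈ verts)
    (hne : v ≠ root) : ∃ u, adj u v := by
  by_contra h
  push_neg at h
  have h0 : {u | adj u v} = ∅ := Set.eq_empty_iff_forall_notMem.2 h
  have : indeg adj v = 0 := by rw [indeg, h0]; simp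
  exact hne (hN.root_unique v hv this)

lemma outdeg_two (hN : IsBinaryNetwork verts adj root) {v : V} (hv : v ∈ verts)
    (hnr : ¬ IsReticulation adj v) (hno : outdeg adj v ≠ 0) : outdeg adj v = 2 := by
  by_cases hroot : v = root
  · subst hroot; exact hN.root_outdeg
  · rcases hN.internal_deg v hv hroot hno with ht | hr
    · exact ht.2
    · exact absurd hr hnr

end RVAux

namespace RVAux

open Relation

variable {V : Type*} {verts : Set V} {adj : V → V → Prop} {root : V}

/-! ### The bypass argument -/

/-- If there is an edge `β → x` where no path from the root to `β` passes through `r`,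
and `ℓ` is reachable from `x` without passing `r`, then there is a root-`ℓ` path
avoiding `r`. -/
lemma bypass (hN : IsBinaryNetwork verts adj root) {r β x ℓ : V}
    (hβx : adj β x) (hxl : Relation.ReflTransGen adj x ℓ)
    (h1 : ¬ Relation.ReflTransGen adj r β) (h2 : ¬ Relation.ReflTransGen adj x r) :
    ∃ l, IsPathFromTo adj l root ℓ ∧ r ∉ l := by
  obtain ⟨l₁, hp1⟩ := exists_path (hN.reach β (hN.adj_mem hβx).1)
  obtain ⟨l₂, hp2⟩ := exists_path hxl
  refine ⟨l₁ ++ l₂, path_append hp1 hp2 hβx, ?_⟩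
  intro hmem
  rcases List.mem_append.1 hmem with h | h
  · exact h1 (mem_path_split hp1 h).2
  · exact h2 (mem_path_split hp2 h).1

/-- From stability of `x`, extract a stable leaf together with reachability. -/
lemma stable_leaf (hN : IsBinaryNetwork verts adj root) {x : V}
    (hS : Stable verts adj root x) :
    ∃ ℓ, IsLeaf verts adj ℓ ∧ (∀ l, IsPathFromTo adj l root ℓ → x ∈ l) ∧
      Relation.ReflTransGen adj x ℓ := by
  obtain ⟨ℓ, hℓ, hall⟩ := hS
  obtain ⟨P, hP⟩ := exists_path (hN.reach ℓ hℓ.1)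
  exact ⟨ℓ, hℓ, hall, (mem_path_split hP (hall P hP)).2⟩

/-- The unique child of a reticulation. -/
lemma retic_child_step (hN : IsBinaryNetwork verts adj root) {u c ℓ : V}
    (hu : IsReticulation adj u) (huc : adj u c)
    (h : Relation.ReflTransGen adj u ℓ) (hne : u ≠ ℓ) :
    Relation.ReflTransGen adj c ℓ := by
  rcases h.cases_head with rfl | ⟨c', hc', ht⟩
  · exact absurd rfl hne
  · obtain ⟨c₀, hc₀⟩ := retic_child hN hu
    have e1 : c' = c₀ := by
      have h' : c' ∈ {y | adj u y} := hc'
      rw [hc₀] at h'; simpa using h'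
    have e2 : c = c₀ := by
      have h' : c ∈ {y | adj u y} := huc
      rw [hc₀] at h'; simpa using h'
    rw [e2, ← e1]; exact ht

/-- helper: extract the other parent of a reticulation given one parent. -/
lemma other_parent (hN : IsBinaryNetwork verts adj root) {v t : V}
    (hv : IsReticulation adj v) (htv : adj t v) :
    ∃ p, adj p v ∧ p ≠ t := by
  obtain ⟨a, b, hab, hpar⟩ := parents_pair hN hv
  have htmem : t ∈ ({a, b} : Set V) := by
    have h' : t ∈ {u | adj u v} := htv
    rwa [hpar] at h'
  have hbmem : b ∈ {u | adj u v} := by rw [hpar]; simp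
  have hamem : a ∈ {u | adj u v} := by rw [hpar]; simp
  rcases htmem with rfl | rfl
  · exact ⟨b, hbmem, fun h => hab h.symm⟩
  · exact ⟨a, hamem, hab⟩

/-- Lemma A: in a reticulation-visible network there is no edge between two
reticulations. -/
lemma no_retic_retic (hN : IsBinaryNetwork verts adj root)
    (hRV : ReticulationVisible verts adj root) {u v : V}
    (huv : adj u v) (hu : IsReticulation adj u) (hv : IsReticulation adj v) : False := by
  obtain ⟨ℓ, hℓ, hall, hul⟩ := stable_leaf hN (hRV u (retic_mem hN hu) hu)
  have hune : u ≠ ℓ := by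
    rintro rfl
    exact leaf_no_child hN hℓ huv
  have hvl : Relation.ReflTransGen adj v ℓ := retic_child_step hN hu huv hul hune
  obtain ⟨p, hpv, hpu⟩ : ∃ p, adj p v ∧ p ≠ u := other_parent hN hv huv
  have h1 : ¬ Relation.ReflTransGen adj u p := by
    intro h
    have : Relation.ReflTransGen adj v p := retic_child_step hN hu huv h (Ne.symm hpu)
    exact rtg_adj_false hN this hpv
  have h2 : ¬ Relation.ReflTransGen adj v u := fun h => rtg_adj_false hN h huv
  obtain ⟨l, hl, hnot⟩ := bypass hN hpv hvl h1 h2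
  exact hnot (hall l hl)

/-- helper: first step of a reflexive-transitive path out of a vertex with
exactly the two children v, w. -/
lemma first_step_pair (hN : IsBinaryNetwork verts adj root) {t v w x : V}
    (hch : {u | adj t u} = {v, w}) (h : Relation.ReflTransGen adj t x) (hne : t ≠ x) :
    Relation.ReflTransGen adj v x ∨ Relation.ReflTransGen adj w x := by
  rcases h.cases_head with rfl | ⟨c, hc, ht⟩
  · exact absurd rfl hne
  · have hcm : c ∈ ({v, w} : Set V) := by
      have h' : c ∈ {u | adj t u} := hc
      rwa [hch] at h'
    rcases hcm with rfl | rfl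
    · exact Or.inl ht
    · exact Or.inr ht

/-- Structural lemma (root case): the two children of the root cannot both be
reticulations. -/
lemma root_children_not_both_retic (hN : IsBinaryNetwork verts adj root)
    (hRV : ReticulationVisible verts adj root) {v w : V}
    (hv : adj root v) (hw : adj root w) (hvw : v ≠ w)
    (hrv : IsReticulation adj v) (hrw : IsReticulation adj w) : False := by
  have hch : {u | adj root u} = {v, w} := children_pair hN hN.root_outdeg hv hw hvw
  -- other parents
  obtain ⟨p, hpv, hpr⟩ : ∃ p, adj p v ∧ p ≠ root := other_parent hN hrv hv
  obtain ⟨q, hqw, hqr⟩ : ∃ q, adj q w ∧ q ≠ root := other_parent hN hrw hw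
  have hvp_or : Relation.ReflTransGen adj v p ∨ Relation.ReflTransGen adj w p :=
    first_step_pair hN hch (hN.reach p (hN.adj_mem hpv).1) (Ne.symm hpr)
  have hwp : Relation.ReflTransGen adj w p := by
    rcases hvp_or with h | h
    · exact absurd hpv (fun hc => rtg_adj_false hN h hc)
    · exact h
  have hvq_or : Relation.ReflTransGen adj v q ∨ Relation.ReflTransGen adj w q :=
    first_step_pair hN hch (hN.reach q (hN.adj_mem hqw).1) (Ne.symm hqr)
  have hvq : Relation.ReflTransGen adj v q := by
    rcases hvq_or with h | h
    · exact h
    · exact absurd hqw (fun hc => rtg_adj_false hN h hc)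
  -- cycle : v ⇝ q → w ⇝ p → v
  exact rtg_adj_false hN ((hvq.tail hqw).trans hwp) hpv

/-- Structural lemma, one-sided version for a tree vertex below a reticulation. -/
lemma tree_children_aux (hN : IsBinaryNetwork verts adj root)
    (hRV : ReticulationVisible verts adj root) {u t v w ℓ : V}
    (hut : adj u t) (hur : IsReticulation adj u)
    (htv : adj t v) (htw : adj t w) (hvw : v ≠ w)
    (hrv : IsReticulation adj v) (hrw : IsReticulation adj w)
    (hch : {y | adj t y} = {v, w})
    (hℓ : IsLeaf verts adj ℓ) (hall : ∀ l, IsPathFromTo adj l root ℓ → u ∈ l)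
    (hvl : Relation.ReflTransGen adj v ℓ) : False := by
  -- u's unique child is t
  have hnotu : ∀ y, adj u y → y = t := by
    intro y hy
    obtain ⟨c₀, hc₀⟩ := retic_child hN hur
    have e1 : y = c₀ := by
      have h' : y ∈ {z | adj u z} := hy
      rw [hc₀] at h'; simpa using h'
    have e2 : t = c₀ := by
      have h' : t ∈ {z | adj u z} := hut
      rw [hc₀] at h'; simpa using h'
    rw [e1, e2]
  -- no path from u avoids t then children
  have hrtg_u_elim : ∀ z, Relation.ReflTransGen adj u z → z ≠ u →
      Relation.ReflTransGen adj t z := by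
    intro z hz hne
    rcases hz.cases_head with rfl | ⟨c, hc, ht⟩
    · exact absurd rfl hne.symm.symm -- z = u case; hne : z ≠ u, rfl : u = z
    · rwa [hnotu c hc] at ht
  -- other parent p of v
  obtain ⟨p, hpv, hpt⟩ := other_parent hN hrv htv
  -- CASE p = u : then v = t, absurd
  have hpu : p ≠ u := by
    rintro rfl
    have : v = t := hnotu v hpv
    subst this
    exact hN.acyclic v (Relation.TransGen.single htv)
  by_cases hCp : Relation.ReflTransGen adj t p
  · -- p inside the descendants of t
    have hpne : p ≠ t := hpt
    rcases first_step_pair hN hch hCp (Ne.symm hpne) with hvp | hwp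
    · exact rtg_adj_false hN hvp hpv
    · -- p below w; now consider w's other parent q
      have hwl : Relation.ReflTransGen adj w ℓ := (hwp.tail hpv).trans hvl
      obtain ⟨q, hqw, hqt⟩ := other_parent hN hrw htw
      have hqu : q ≠ u := by
        rintro rfl
        have : w = t := hnotu w hqw
        subst this
        exact hN.acyclic w (Relation.TransGen.single htw)
      by_cases hCq : Relation.ReflTransGen adj t q
      · rcases first_step_pair hN hch hCq (Ne.symm hqt) with hvq | hwq
        · -- cycle v ⇝ q → w ⇝ p → v
          exact rtg_adj_false hN ((hvq.tail hqw).trans hwp) hpv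
        · exact rtg_adj_false hN hwq hqw
      · -- bypass via q and w
        have h1 : ¬ Relation.ReflTransGen adj u q := by
          intro h
          exact hCq (hrtg_u_elim q h hqu)
        have h2 : ¬ Relation.ReflTransGen adj w u := by
          intro h
          exact hN.acyclic w (Relation.TransGen.tail' (h.tail hut) htw)
        obtain ⟨l, hl, hnot⟩ := bypass hN hqw hwl h1 h2
        exact hnot (hall l hl)
  · -- bypass via p and v
    have h1 : ¬ Relation.ReflTransGen adj u p := by
      intro h
      exact hCp (hrtg_u_elim p h hpu)
    have h2 : ¬ Relation.ReflTransGen adj v u := by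
      intro h
      exact hN.acyclic v (Relation.TransGen.tail' (h.tail hut) htv)
    obtain ⟨l, hl, hnot⟩ := bypass hN hpv hvl h1 h2
    exact hnot (hall l hl)

/-- Structural lemma (non-root case): a vertex with a reticulation parent cannot
have two reticulation children. -/
lemma tree_children_not_both_retic (hN : IsBinaryNetwork verts adj root)
    (hRV : ReticulationVisible verts adj root) {u t v w : V}
    (hut : adj u t) (hur : IsReticulation adj u)
    (htv : adj t v) (htw : adj t w) (hvw : v ≠ w)
    (hrv : IsReticulation adj v) (hrw : IsReticulation adj w) : False := by
  -- t is not a reticulation (else Lemma A applies)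
  have htnr : ¬ IsReticulation adj t := fun h => no_retic_retic hN hRV hut hur h
  have htmem : t ∈ verts := (hN.adj_mem hut).2
  have hto : outdeg adj t ≠ 0 := by
    intro h0
    exact leaf_no_child hN ⟨htmem, h0⟩ htv
  have hch : {y | adj t y} = {v, w} :=
    children_pair hN (outdeg_two hN htmem htnr hto) htv htw hvw
  obtain ⟨ℓ, hℓ, hall, hul⟩ := stable_leaf hN (hRV u (retic_mem hN hur) hur)
  have hune : u ≠ ℓ := by
    rintro rfl
    exact leaf_no_child hN hℓ hut
  have htl : Relation.ReflTransGen adj t ℓ := retic_child_step hN hur hut hul hune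
  have htne : t ≠ ℓ := by
    rintro rfl
    exact leaf_no_child hN hℓ htv
  rcases first_step_pair hN hch htl htne with hvl | hwl
  · exact tree_children_aux hN hRV hut hur htv htw hvw hrv hrw hch hℓ hall hvl
  · exact tree_children_aux hN hRV hut hur htw htv (Ne.symm hvw) hrw hrv
      (by rw [hch]; ext x; simp; tauto) hℓ hall hwl

end RVAux

namespace RVAux

open Relation

variable {V : Type*} {verts : Set V} {adj : V → V → Prop} {root : V}

/-! ### Tree components and their heads -/

/-- Adjacency between two non-reticulation vertices. -/
def TreeAdj (adj : V → V → Prop) (v w : V) : Prop :=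
  adj v w ∧ ¬ IsReticulation adj v ∧ ¬ IsReticulation adj w

/-- A head of a tree component: the root, or a non-reticulation vertex whose
parent is a reticulation. -/
def IsHeadish (verts : Set V) (adj : V → V → Prop) (root : V) (h : V) : Prop :=
  h ∈ verts ∧ ¬ IsReticulation adj h ∧
    (h = root ∨ ∃ u, adj u h ∧ IsReticulation adj u)

/-- `h` is the head of the tree component containing `x`. -/
def HeadOf (verts : Set V) (adj : V → V → Prop) (root : V) (h x : V) : Prop :=
  IsHeadish verts adj root h ∧ Relation.ReflTransGen (TreeAdj adj) h x

lemma rtg_treeAdj_sub {a b : V} (h : Relation.ReflTransGen (TreeAdj adj) a b) :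
    Relation.ReflTransGen adj a b :=
  Relation.ReflTransGen.mono (r := TreeAdj adj) (p := adj) (fun _ _ hc => hc.1) _ _ h

lemma headOf_mem (hN : IsBinaryNetwork verts adj root) {h x : V}
    (hho : HeadOf verts adj root h x) : x ∈ verts ∧ ¬ IsReticulation adj x := by
  rcases hho.2.cases_tail with heq | ⟨z, _, hzx⟩
  · subst heq; exact ⟨hho.1.1, hho.1.2.1⟩
  · exact ⟨(hN.adj_mem hzx.1).2, hzx.2.2⟩

lemma headOf_root (hN : IsBinaryNetwork verts adj root) {h : V}
    (hho : HeadOf verts adj root h root) : h = root := by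
  rcases hho.2.cases_tail with heq | ⟨z, _, hzx⟩
  · exact heq.symm
  · exact absurd hzx.1 (fun hc => root_no_parent hN hc)

lemma headOf_self {h : V} (hh : IsHeadish verts adj root h) :
    HeadOf verts adj root h h := ⟨hh, .refl⟩

lemma headOf_tail {h x y : V} (hho : HeadOf verts adj root h x)
    (hxy : TreeAdj adj x y) : HeadOf verts adj root h y :=
  ⟨hho.1, hho.2.tail hxy⟩

lemma anc_lt (hN : IsBinaryNetwork verts adj root) {p x : V} (hpx : adj p x) :
    {y | Relation.TransGen adj y p}.ncard < {y | Relation.TransGen adj y x}.ncard := by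
  have hsubv : ∀ z : V, {y | Relation.TransGen adj y z} ⊆ verts := by
    intro z y hy
    obtain ⟨c, hc, -⟩ := Relation.TransGen.head'_iff.1 hy
    exact (hN.adj_mem hc).1
  apply Set.ncard_lt_ncard
  · rw [Set.ssubset_def]
    constructor
    · exact fun y hy => hy.tail hpx
    · intro hcon
      exact hN.acyclic p (hcon (Relation.TransGen.single hpx))
  · exact hN.finite_verts.subset (hsubv x)

lemma head_exists_unique (hN : IsBinaryNetwork verts adj root) :
    ∀ (n : ℕ) (x : V), {y | Relation.TransGen adj y x}.ncard = n → x ∈ verts →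
      ¬ IsReticulation adj x → ∃! h, HeadOf verts adj root h x := by
  intro n
  induction n using Nat.strong_induction_on with
  | _ n ih =>
    intro x hm hx hnr
    by_cases hh : x = root ∨ ∃ u, adj u x ∧ IsReticulation adj u
    · refine ⟨x, headOf_self ⟨hx, hnr, hh⟩, ?_⟩
      rintro h' ⟨hh', hrtg⟩
      rcases hrtg.cases_tail with heq | ⟨z, _, hzx⟩
      · exact heq.symm
      · exfalso
        rcases hh with rfl | ⟨u, hux, hu⟩
        · exact root_no_parent hN hzx.1
        · have hxr : x ≠ root := fun e => root_no_parent hN (e ▸ hux)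
          obtain ⟨p₀, hp₀⟩ := unique_parent hN hx hxr hnr
          have hz0 : z = p₀ := by
            have h' : z ∈ {u | adj u x} := hzx.1
            rw [hp₀] at h'; simpa using h'
          have hu0 : u = p₀ := by
            have h' : u ∈ {u' | adj u' x} := hux
            rw [hp₀] at h'; simpa using h'
          exact hzx.2.1 (by rw [hz0, ← hu0]; exact hu)
    · have hh2 := hh
      push_neg at hh2
      obtain ⟨hxr, hpar⟩ := hh2
      obtain ⟨u, hux⟩ := exists_parent hN hx hxr
      have hun : ¬ IsReticulation adj u := hpar u hux
      obtain ⟨p₀, hp₀⟩ := unique_parent hN hx hxr hnr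
      have hlt : {y | Relation.TransGen adj y u}.ncard < n := hm ▸ anc_lt hN hux
      obtain ⟨h₀, hh₀, huniq⟩ := ih _ hlt u rfl (hN.adj_mem hux).1 hun
      refine ⟨h₀, headOf_tail hh₀ ⟨hux, hun, hnr⟩, ?_⟩
      rintro h' ⟨hh', hrtg⟩
      rcases hrtg.cases_tail with heq | ⟨z, hz, hzx⟩
      · exfalso; subst heq; exact hh hh'.2.2
      · apply huniq
        have hz0 : z = u := by
          have h1 : z ∈ {u' | adj u' x} := hzx.1
          have h2 : u ∈ {u' | adj u' x} := hux
          rw [hp₀] at h1 h2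
          simp only [Set.mem_singleton_iff] at h1 h2
          rw [h1, h2]
        exact ⟨hh', hz0 ▸ hz⟩

open Classical in
/-- The head of the tree component of `x` (junk value if undefined). -/
noncomputable def hd (verts : Set V) (adj : V → V → Prop) (root : V) (x : V) : V :=
  if hx : ∃! h, HeadOf verts adj root h x then hx.exists.choose else x

lemma hd_spec (hN : IsBinaryNetwork verts adj root) {x : V} (hx : x ∈ verts)
    (hnr : ¬ IsReticulation adj x) : HeadOf verts adj root (hd verts adj root x) x := by
  have heu := head_exists_unique hN _ x rfl hx hnr
  rw [hd, dif_pos heu]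
  exact heu.exists.choose_spec

lemma hd_eq (hN : IsBinaryNetwork verts adj root) {h x : V}
    (hho : HeadOf verts adj root h x) : hd verts adj root x = h := by
  obtain ⟨hx, hnr⟩ := headOf_mem hN hho
  exact (head_exists_unique hN _ x rfl hx hnr).unique (hd_spec hN hx hnr) hho

end RVAux

namespace RVAux

open Relation

variable {V : Type*} {verts : Set V} {adj : V → V → Prop} {root : V}

/-- A head is leafy if its tree component contains a leaf. -/
def LeafyHead (verts : Set V) (adj : V → V → Prop) (root : V) (h : V) : Prop :=
  ∃ x, HeadOf verts adj root h x ∧ IsLeaf verts adj x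

/-- Key counting lemma: a leafless tree component emits at least 3 edges
into reticulations. -/
lemma leafless_fiber (hN : IsBinaryNetwork verts adj root)
    (hRV : ReticulationVisible verts adj root) {h : V}
    (hh : IsHeadish verts adj root h) (hnl : ¬ LeafyHead verts adj root h) :
    3 ≤ {p : V × V | (adj p.1 p.2 ∧ IsReticulation adj p.2) ∧
          hd verts adj root p.1 = h}.ncard := by
  classical
  set C : Set V := {x | HeadOf verts adj root h x} with hCdef
  have hCsub : C ⊆ verts := fun x hx => (headOf_mem hN hx).1
  have hCfin : C.Finite := hN.finite_verts.subset hCsub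
  have hCh : h ∈ C := headOf_self hh
  have hCnr : ∀ x ∈ C, ¬ IsReticulation adj x := fun x hx => (headOf_mem hN hx).2
  have hdeg : ∀ x ∈ C, outdeg adj x = 2 := by
    intro x hx
    refine outdeg_two hN (hCsub hx) (hCnr x hx) ?_
    intro h0
    exact hnl ⟨x, hx, ⟨hCsub hx, h0⟩⟩
  -- C has at least two elements
  have hCtwo : 2 ≤ C.ncard := by
    obtain ⟨v, w, hvw, hch⟩ := Set.ncard_eq_two.1 (hdeg h hCh)
    have hv : adj h v := by
      have : v ∈ {y | adj h y} := by rw [hch]; simp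
      exact this
    have hw : adj h w := by
      have : w ∈ {y | adj h y} := by rw [hch]; simp
      exact this
    have hstep : ∀ y, adj h y → ¬ IsReticulation adj y → ∃ x ∈ C, x ≠ h := by
      intro y hy hynr
      refine ⟨y, headOf_tail (headOf_self hh) ⟨hy, hh.2.1, hynr⟩, ?_⟩
      rintro rfl
      exact hN.acyclic y (Relation.TransGen.single hy)
    have hpair : ∃ x ∈ C, x ≠ h := by
      by_cases hred : IsReticulation adj v
      · by_cases hred' : IsReticulation adj w
        · exfalso
          rcases hh.2.2 with rfl | ⟨u, huh, hu⟩
          · exact root_children_not_both_retic hN hRV hv hw hvw hred hred'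
          · exact tree_children_not_both_retic hN hRV huh hu hv hw hvw hred hred'
        · exact hstep w hw hred'
      · exact hstep v hv hred
    obtain ⟨x, hx, hxh⟩ := hpair
    have : ({x, h} : Set V) ⊆ C := by
      intro z hz
      rcases hz with rfl | rfl
      · exact hx
      · exact hCh
    calc 2 = ({x, h} : Set V).ncard := (Set.ncard_pair hxh).symm
    _ ≤ C.ncard := Set.ncard_le_ncard this hCfin
  -- Finset versions
  set F : Finset V := hN.finite_verts.toFinset with hFdef
  have hmemF : ∀ x : V, x ∈ F ↔ x ∈ verts := fun x => Set.Finite.mem_toFinset _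
  set CF : Finset V := hCfin.toFinset with hCFdef
  have hmemCF : ∀ x : V, x ∈ CF ↔ x ∈ C := fun x => Set.Finite.mem_toFinset _
  set OutF : Finset (V × V) :=
    (F ×ˢ F).filter (fun p => p.1 ∈ C ∧ adj p.1 p.2) with hOutFdef
  have hmemOutF : ∀ p : V × V, p ∈ OutF ↔ p.1 ∈ C ∧ adj p.1 p.2 := by
    intro p
    simp only [hOutFdef, Finset.mem_filter, Finset.mem_product, hmemF]
    constructor
    · tauto
    · intro hp
      exact ⟨⟨hCsub hp.1, (hN.adj_mem hp.2).2⟩, hp⟩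
  -- |OutF| = 2 * |C|
  have hOutcard : OutF.card = 2 * CF.card := by
    rw [Finset.card_eq_sum_card_fiberwise
      (f := fun p : V × V => p.1) (t := CF)
      (fun p hp => (hmemCF p.1).2 ((hmemOutF p).1 hp).1)]
    have hfib : ∀ x ∈ CF, (OutF.filter (fun p => p.1 = x)).card = 2 := by
      intro x hx
      have : (OutF.filter (fun p => p.1 = x)).card
          = ((children_finite hN x).toFinset).card := by
        apply Finset.card_bij' (fun p _ => p.2) (fun y _ => (x, y))
          (fun p hp => ?_) (fun y hy => ?_) (fun p hp => ?_) (fun y hy => ?_)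
        · simp only [Finset.mem_filter] at hp
          simp only [Set.Finite.mem_toFinset]
          have h2 := (hmemOutF p).1 hp.1
          rw [hp.2] at h2
          exact h2.2
        · simp only [Set.Finite.mem_toFinset] at hy
          exact Finset.mem_filter.2 ⟨(hmemOutF (x, y)).2 ⟨(hmemCF x).1 hx, hy⟩, rfl⟩
        · simp only [Finset.mem_filter] at hp
          exact Prod.ext hp.2.symm rfl
        · rfl
      rw [this, ← Set.ncard_eq_toFinset_card _ (children_finite hN x)]
      exact hdeg x ((hmemCF x).1 hx)
    rw [Finset.sum_congr rfl hfib, Finset.sum_const, smul_eq_mul, mul_comm]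
  -- internal edges
  set IntF : Finset (V × V) :=
    OutF.filter (fun p => ¬ IsReticulation adj p.2) with hIntFdef
  have hIntcard : IntF.card = CF.card - 1 := by
    have herase : IntF.card = (CF.erase h).card := by
      apply Finset.card_bij (fun p _ => p.2)
      · intro p hp
        simp only [hIntFdef, Finset.mem_filter] at hp
        obtain ⟨hpo, hpnr⟩ := hp
        obtain ⟨hp1, hadj⟩ := (hmemOutF p).1 hpo
        have hp2C : p.2 ∈ C := headOf_tail hp1 ⟨hadj, hCnr _ hp1, hpnr⟩
        have hp2h : p.2 ≠ h := by
          rintro heq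
          exact rtg_adj_false hN (rtg_treeAdj_sub hp1.2) (heq ▸ hadj)
        rw [Finset.mem_erase]
        exact ⟨hp2h, (hmemCF _).2 hp2C⟩
      · intro p hp q hq heq
        simp only [hIntFdef, Finset.mem_filter] at hp hq
        obtain ⟨hpo, hpnr⟩ := hp
        obtain ⟨hqo, hqnr⟩ := hq
        obtain ⟨hp1, hadjp⟩ := (hmemOutF p).1 hpo
        obtain ⟨hq1, hadjq⟩ := (hmemOutF q).1 hqo
        have hy : p.2 ∈ verts := (hN.adj_mem hadjp).2
        have hyroot : p.2 ≠ root := by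
          rintro hroo
          exact root_no_parent hN (hroo ▸ hadjp)
        obtain ⟨p₀, hp₀⟩ := unique_parent hN hy hyroot hpnr
        have e1 : p.1 = p₀ := by
          have h' : p.1 ∈ {u | adj u p.2} := hadjp
          rw [hp₀] at h'; simpa using h'
        have e2 : q.1 = p₀ := by
          have h' : q.1 ∈ {u | adj u q.2} := hadjq
          rw [← heq] at h'
          rw [hp₀] at h'; simpa using h'
        exact Prod.ext (e1.trans e2.symm) heq
      · intro y hy
        rw [Finset.mem_erase, hmemCF] at hy
        obtain ⟨hyh, hyC⟩ := hy
        rcases hyC.2.cases_tail with heq | ⟨z, hz, hzy⟩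
        · exact absurd heq hyh
        · refine ⟨(z, y), ?_, rfl⟩
          simp only [hIntFdef, Finset.mem_filter]
          refine ⟨(hmemOutF (z, y)).2 ⟨⟨hyC.1, hz⟩, hzy.1⟩, hzy.2.2⟩

    rw [herase, Finset.card_erase_of_mem ((hmemCF h).2 hCh)]
  -- the fiber is OutF minus internal edges
  set FibF : Finset (V × V) :=
    OutF.filter (fun p => IsReticulation adj p.2) with hFibFdef
  have hsplit : FibF.card + IntF.card = OutF.card := by
    rw [hFibFdef, hIntFdef]
    exact Finset.card_filter_add_card_filter_not _
  have hCFcard : 2 ≤ CF.card := by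
    rw [← Set.ncard_eq_toFinset_card _ hCfin]
    exact hCtwo
  have hFibcard : 3 ≤ FibF.card := by omega
  -- identify FibF with the target set
  have htarget : {p : V × V | (adj p.1 p.2 ∧ IsReticulation adj p.2) ∧
      hd verts adj root p.1 = h} = ↑FibF := by
    ext p
    simp only [Set.mem_setOf_eq, Finset.coe_filter, hFibFdef, Set.mem_setOf_eq,
      hmemOutF]
    constructor
    · rintro ⟨⟨hadj, hret⟩, hhd⟩
      have hp1nr : ¬ IsReticulation adj p.1 := fun hc => no_retic_retic hN hRV hadj hc hret
      have hp1v : p.1 ∈ verts := (hN.adj_mem hadj).1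
      have := hd_spec hN hp1v hp1nr
      rw [hhd] at this
      exact ⟨⟨this, hadj⟩, hret⟩
    · rintro ⟨⟨hC, hadj⟩, hret⟩
      exact ⟨⟨hadj, hret⟩, hd_eq hN hC⟩
  rw [htarget, Set.ncard_coe_finset]
  exact hFibcard

end RVAux

namespace RVAux

variable {V : Type*} {verts : Set V} {adj : V → V → Prop} {root : V}

lemma retic_child' (hN : IsBinaryNetwork verts adj root) {v : V}
    (hv : IsReticulation adj v) : ∃ c, adj v c ∧ ∀ y, adj v y → y = c := by
  obtain ⟨c, hc⟩ := retic_child hN hv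
  refine ⟨c, ?_, ?_⟩
  · have : c ∈ {y | adj v y} := by rw [hc]; simp
    exact this
  · intro y hy
    have h' : y ∈ {y | adj v y} := hy
    rw [hc] at h'; simpa using h'

lemma nh_headish (hN : IsBinaryNetwork verts adj root)
    (hRV : ReticulationVisible verts adj root) {h : V}
    (hh : ∃ u, adj u h ∧ IsReticulation adj u) : IsHeadish verts adj root h := by
  obtain ⟨u, huh, hu⟩ := hh
  exact ⟨(hN.adj_mem huh).2, fun hc => no_retic_retic hN hRV huh hu hc,
    Or.inr ⟨u, huh, hu⟩⟩

end RVAux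

/-- Theorem 1: every binary reticulation-visible network with `n` leaves has
at most `4 * (n - 1)` reticulations. -/
theorem reticulationVisible_reticulation_bound {V : Type*} (verts : Set V)
    (adj : V → V → Prop) (root : V) (hN : IsBinaryNetwork verts adj root)
    (hRV : ReticulationVisible verts adj root) :
    {v : V | IsReticulation adj v}.ncard ≤
      4 * ({v : V | IsLeaf verts adj v}.ncard - 1) := by
  classical
  set R : Set V := {v | IsReticulation adj v} with hRdef
  set L : Set V := {v | IsLeaf verts adj v} with hLdef
  have hRsub : R ⊆ verts := fun v hv => RVAux.retic_mem hN hv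
  have hRfin : R.Finite := hN.finite_verts.subset hRsub
  have hLfin : L.Finite := hN.finite_verts.subset (fun v hv => hv.1)
  suffices h : R.ncard + 3 ≤ 3 * L.ncard by omega
  -- the set of edges into reticulations
  set EFs : Set (V × V) := {p | adj p.1 p.2 ∧ IsReticulation adj p.2} with hEFdef
  have hEFfin : EFs.Finite := (hN.finite_verts.prod hN.finite_verts).subset
    (fun p hp => Set.mem_prod.2 ⟨(hN.adj_mem hp.1).1, (hN.adj_mem hp.1).2⟩)
  set Heads : Set V := {h | RVAux.IsHeadish verts adj root h} with hHdef
  have hHfin : Heads.Finite := hN.finite_verts.subset (fun h hh => hh.1)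
  set EFF := hEFfin.toFinset with hEFFdef
  set RF := hRfin.toFinset with hRFdef
  have hRFcard : RF.card = R.ncard := (Set.ncard_eq_toFinset_card _ hRfin).symm
  set HF := hHfin.toFinset with hHFdef
  have hmemEFF : ∀ p : V × V, p ∈ EFF ↔ adj p.1 p.2 ∧ IsReticulation adj p.2 :=
    fun p => by rw [hEFFdef]; exact Set.Finite.mem_toFinset _
  have hmemRF : ∀ v : V, v ∈ RF ↔ IsReticulation adj v :=
    fun v => by rw [hRFdef]; exact Set.Finite.mem_toFinset _
  have hmemHF : ∀ h : V, h ∈ HF ↔ RVAux.IsHeadish verts adj root h :=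
    fun h => by rw [hHFdef]; exact Set.Finite.mem_toFinset _
  -- Step 1 : the number of edges into reticulations is 2 |R|
  have step1 : EFF.card = 2 * RF.card := by
    rw [Finset.card_eq_sum_card_fiberwise (f := fun p : V × V => p.2) (t := RF)
      (fun p hp => (hmemRF _).2 ((hmemEFF p).1 hp).2)]
    have hfib : ∀ v ∈ RF, (EFF.filter (fun p => p.2 = v)).card = 2 := by
      intro v hv
      rw [hmemRF] at hv
      have hbij : (EFF.filter (fun p => p.2 = v)).card
          = ((RVAux.parents_finite hN v).toFinset).card := by
        apply Finset.card_bij' (fun p _ => p.1) (fun u _ => (u, v))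
          (fun p hp => ?_) (fun u hu => ?_) (fun p hp => ?_) (fun u hu => ?_)
        · simp only [Finset.mem_filter] at hp
          simp only [Set.Finite.mem_toFinset]
          have h2 := ((hmemEFF p).1 hp.1).1
          rw [hp.2] at h2
          exact h2
        · simp only [Set.Finite.mem_toFinset] at hu
          exact Finset.mem_filter.2 ⟨(hmemEFF (u, v)).2 ⟨hu, hv⟩, rfl⟩
        · simp only [Finset.mem_filter] at hp
          exact Prod.ext rfl hp.2.symm
        · rfl
      rw [hbij, ← Set.ncard_eq_toFinset_card _ (RVAux.parents_finite hN v)]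
      exact hv.1
    rw [Finset.sum_congr rfl hfib, Finset.sum_const, smul_eq_mul, mul_comm]
  -- Step 2 : fiberwise decomposition of edges by head of the source
  have step2 : EFF.card
      = ∑ h ∈ HF, (EFF.filter (fun p => RVAux.hd verts adj root p.1 = h)).card := by
    apply Finset.card_eq_sum_card_fiberwise
    intro p hp
    rw [Finset.mem_coe, hmemEFF] at hp
    rw [Finset.mem_coe, hmemHF]
    have hp1nr : ¬ IsReticulation adj p.1 :=
      fun hc => RVAux.no_retic_retic hN hRV hp.1 hc hp.2
    exact (RVAux.hd_spec hN (hN.adj_mem hp.1).1 hp1nr).1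
  -- leafless heads
  set Lless : Set V := {h | RVAux.IsHeadish verts adj root h ∧
      ¬ RVAux.LeafyHead verts adj root h} with hLlessdef
  have hLlessfin : Lless.Finite := hHfin.subset (fun h hh => hh.1)
  set LlessF := hLlessfin.toFinset with hLlessFdef
  have hLlesscard : LlessF.card = Lless.ncard :=
    (Set.ncard_eq_toFinset_card _ hLlessfin).symm
  -- Step 3 : each leafless head absorbs at least 3 edge slots
  have step3 : 3 * Lless.ncard ≤ 2 * R.ncard := by
    have hsub : LlessF ⊆ HF := by
      intro h hh
      rw [hLlessFdef, Set.Finite.mem_toFinset] at hh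
      rw [hmemHF]
      exact hh.1
    have hbound : ∀ h ∈ LlessF,
        3 ≤ (EFF.filter (fun p => RVAux.hd verts adj root p.1 = h)).card := by
      intro h hh
      rw [hLlessFdef, Set.Finite.mem_toFinset] at hh
      have hkey := RVAux.leafless_fiber hN hRV hh.1 hh.2
      have hset : {p : V × V | (adj p.1 p.2 ∧ IsReticulation adj p.2) ∧
          RVAux.hd verts adj root p.1 = h}
          = ↑(EFF.filter (fun p => RVAux.hd verts adj root p.1 = h)) := by
        ext p
        simp only [Set.mem_setOf_eq, Finset.coe_filter, hmemEFF]
      rw [hset, Set.ncard_coe_finset] at hkey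
      exact hkey
    calc 3 * Lless.ncard = LlessF.card • 3 := by
          rw [hLlesscard, smul_eq_mul, mul_comm]
    _ ≤ ∑ h ∈ LlessF, (EFF.filter (fun p => RVAux.hd verts adj root p.1 = h)).card :=
          Finset.card_nsmul_le_sum _ _ _ hbound
    _ ≤ ∑ h ∈ HF, (EFF.filter (fun p => RVAux.hd verts adj root p.1 = h)).card :=
          Finset.sum_le_sum_of_subset hsub
    _ = EFF.card := step2.symm
    _ = 2 * RF.card := step1
    _ = 2 * R.ncard := by rw [hRFcard]
  -- Step 4 : reticulations biject with non-root heads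
  set NHs : Set V := {h | ∃ u, adj u h ∧ IsReticulation adj u} with hNHdef
  have hNHsub : NHs ⊆ verts := fun h hh => (hN.adj_mem hh.choose_spec.1).2
  have hNHfin : NHs.Finite := hN.finite_verts.subset hNHsub
  have step4 : R.ncard = NHs.ncard := by
    rw [Set.ncard_eq_toFinset_card _ hRfin, Set.ncard_eq_toFinset_card _ hNHfin]
    apply Finset.card_bij (fun v hv =>
      (RVAux.retic_child' hN
        (show IsReticulation adj v from (Set.Finite.mem_toFinset hRfin).1 hv)).choose)
    · intro v hv
      have hv' : IsReticulation adj v := (Set.Finite.mem_toFinset hRfin).1 hv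
      have hspec := (RVAux.retic_child' hN hv').choose_spec
      rw [Set.Finite.mem_toFinset]
      exact ⟨v, hspec.1, hv'⟩
    · intro v₁ hv₁ v₂ hv₂ heq
      have hv₁' : IsReticulation adj v₁ := (Set.Finite.mem_toFinset hRfin).1 hv₁
      have hv₂' : IsReticulation adj v₂ := (Set.Finite.mem_toFinset hRfin).1 hv₂
      have hs₁ := (RVAux.retic_child' hN hv₁').choose_spec
      have hs₂ := (RVAux.retic_child' hN hv₂').choose_spec
      set c := (RVAux.retic_child' hN hv₁').choose with hcdef
      have hadj₁ : adj v₁ c := hs₁.1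
      have hadj₂ : adj v₂ c := heq ▸ hs₂.1
      have hcnr : ¬ IsReticulation adj c :=
        fun hc => RVAux.no_retic_retic hN hRV hadj₁ hv₁' hc
      have hcv : c ∈ verts := (hN.adj_mem hadj₁).2
      have hcroot : c ≠ root := fun hc => RVAux.root_no_parent hN (hc ▸ hadj₁)
      obtain ⟨p₀, hp₀⟩ := RVAux.unique_parent hN hcv hcroot hcnr
      have e1 : v₁ = p₀ := by
        have h' : v₁ ∈ {u | adj u c} := hadj₁
        rw [hp₀] at h'; simpa using h'
      have e2 : v₂ = p₀ := by
        have h' : v₂ ∈ {u | adj u c} := hadj₂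
        rw [hp₀] at h'; simpa using h'
      rw [e1, e2]
    · intro h hh
      rw [Set.Finite.mem_toFinset] at hh
      obtain ⟨u, huh, hu⟩ := hh
      refine ⟨u, (Set.Finite.mem_toFinset _).2 hu, ?_⟩
      have hspec := (RVAux.retic_child' hN hu).choose_spec
      exact (hspec.2 h huh).symm
  -- Step 5 : leafy heads are bounded by the number of leaves
  set Leafys : Set V := {h | RVAux.LeafyHead verts adj root h} with hLeafydef
  have hLeafysub : Leafys ⊆ verts := fun h hh => hh.choose_spec.1.1.1
  have hLeafyfin : Leafys.Finite := hN.finite_verts.subset hLeafysub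
  have step5 : Leafys.ncard ≤ L.ncard := by
    have hsub : Leafys ⊆ (RVAux.hd verts adj root) '' L := by
      rintro h ⟨x, hho, hx⟩
      exact ⟨x, hx, RVAux.hd_eq hN hho⟩
    calc Leafys.ncard ≤ ((RVAux.hd verts adj root) '' L).ncard :=
          Set.ncard_le_ncard hsub (hLfin.image _)
    _ ≤ L.ncard := Set.ncard_image_le hLfin
  -- split the non-root heads into leafy and leafless
  have hsplitNH : (NHs ∩ Leafys).ncard + (NHs \ Leafys).ncard = NHs.ncard :=
    Set.ncard_inter_add_ncard_diff_eq_ncard NHs Leafys hNHfin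
  have hrootNH : root ∉ NHs := fun hc => RVAux.root_no_parent hN hc.choose_spec.1
  have hdiffsub : NHs \ Leafys ⊆ Lless := by
    rintro h ⟨hh, hnl⟩
    exact ⟨RVAux.nh_headish hN hRV hh, hnl⟩
  have hrootheadish : RVAux.IsHeadish verts adj root root :=
    ⟨hN.root_mem, RVAux.root_not_retic hN, Or.inl rfl⟩
  by_cases hA : RVAux.LeafyHead verts adj root root
  · -- the root component is leafy
    have hins : insert root (NHs ∩ Leafys) ⊆ Leafys := by
      rintro z hz
      rcases Set.mem_insert_iff.1 hz with rfl | hz'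
      · exact hA
      · exact hz'.2
    have hbound1 : (NHs ∩ Leafys).ncard + 1 ≤ Leafys.ncard := by
      rw [← Set.ncard_insert_of_notMem (fun hc => hrootNH hc.1)
        (hNHfin.inter_of_left _)]
      exact Set.ncard_le_ncard hins hLeafyfin
    have hbound2 : (NHs \ Leafys).ncard ≤ Lless.ncard :=
      Set.ncard_le_ncard hdiffsub hLlessfin
    omega
  · -- the root component is leafless
    have hrootLless : root ∈ Lless := ⟨hrootheadish, hA⟩
    have hins : insert root (NHs \ Leafys) ⊆ Lless := by
      rintro z hz
      rcases Set.mem_insert_iff.1 hz with rfl | hz'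
      · exact hrootLless
      · exact hdiffsub hz'
    have hbound1 : (NHs \ Leafys).ncard + 1 ≤ Lless.ncard := by
      rw [← Set.ncard_insert_of_notMem (fun hc => hrootNH hc.1)
        (hNHfin.diff)]
      exact Set.ncard_le_ncard hins hLlessfin
    have hbound2 : (NHs ∩ Leafys).ncard ≤ Leafys.ncard :=
      Set.ncard_le_ncard Set.inter_subset_right hLeafyfin
    omega
end

section
/- In a binary nearly stable network, every parent of an unstable reticulation is stable and is not a reticulation. -/
private lemma exists_next_mem {V : Type*} {adj : V → V → Prop} :
    ∀ {l : List V} {x b : V}, l.Chain' adj → l.getLast? = some b → x ∈ l → x ≠ b →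
      ∃ y, adj x y ∧ y ∈ l
  | [], _, _, _, h, hx, _ => by simp at hx
  | [c], x, b, _, h, hx, hne => by
      simp at hx h; exact absurd (hx.trans h) hne
  | c :: d :: t, x, b, hch, h, hx, hne => by
      simp only [List.Chain', List.isChain_cons_cons] at hch
      rcases List.mem_cons.mp hx with rfl | hx
      · exact ⟨d, hch.1, by simp⟩
      · have hlast : (d :: t).getLast? = some b := by
          rwa [List.getLast?_cons_cons] at h
        obtain ⟨y, hy, hym⟩ := exists_next_mem hch.2 hlast hx hne
        exact ⟨y, hy, List.mem_cons_of_mem _ hym⟩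

/-- In a binary nearly stable network, every parent of an unstable
reticulation is stable and is not a reticulation. -/
theorem parent_of_unstable_reticulation {V : Type*} (verts : Set V)
    (adj : V → V → Prop) (root : V) (hN : IsBinaryNetwork verts adj root)
    (hNS : NearlyStable verts adj root) (a p : V)
    (ha : IsReticulation adj a) (hua : ¬ Stable verts adj root a)
    (hpa : adj p a) :
    Stable verts adj root p ∧ ¬ IsReticulation adj p := by
  have hav : a ∈ verts := (hN.adj_mem hpa).2
  have hp : Stable verts adj root p := by
    rcases hNS a hav with h | h
    · exact absurd h hua
    · exact h p hpa
  refine ⟨hp, fun hretp => ?_⟩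
  -- p has a unique child, namely a
  have h1 : ({u | adj p u}).ncard = 1 := hretp.2
  obtain ⟨c, hc⟩ := Set.ncard_eq_one.mp h1
  have hca : c = a := by
    have : a ∈ ({c} : Set V) := hc ▸ hpa
    simpa using this.symm
  subst hca
  obtain ⟨ℓ, hℓ, hall⟩ := hp
  apply hua
  refine ⟨ℓ, hℓ, fun l hl => ?_⟩
  have hpl : p ∈ l := hall l hl
  have hne : p ≠ ℓ := by
    intro h; subst h
    exact one_ne_zero (hretp.2.symm.trans hℓ.2)
  have hlast : l.getLast? = some ℓ := hl.2.2
  obtain ⟨y, hy, hym⟩ := exists_next_mem hl.1 hlast hpl hne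
  have : y ∈ ({c} : Set V) := hc ▸ hy
  simp at this
  rwa [← this]
end

section
/- In a binary nearly stable network, if c is a tree vertex that is a parent of an unstable reticulation a, then the child of c other than a is stable and is not a reticulation. -/
namespace PathAux

variable {V : Type*} {adj : V → V → Prop} {l m : List V} {a b t r u v x : V}

abbrev P (adj : V → V → Prop) (l : List V) (a b : V) := IsPathFromTo adj l a b

lemma ne_nil (h : P adj l a b) : l ≠ [] := by
  rintro rfl; exact absurd h.2.1 (by simp)

lemma singleton (x : V) : P adj [x] x x := ⟨List.isChain_singleton x, rfl, rfl⟩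

lemma head_mem (h : P adj l a b) : a ∈ l := by
  obtain ⟨_, h2, _⟩ := h
  cases l with
  | nil => simp at h2
  | cons y l' => simp at h2; simp [h2]

lemma last_mem (h : P adj l a b) : b ∈ l := by
  have := h.2.2
  have hne := ne_nil h
  rw [List.getLast?_eq_getLast hne] at this
  have := Option.some_injective _ this
  rw [← this]
  exact List.getLast_mem hne

lemma chain'_reflTransGen (hc : l.Chain' adj) (hh : l.head? = some a) (hx : x ∈ l) :
    Relation.ReflTransGen adj a x := by
  induction l generalizing a with
  | nil => simp at hx
  | cons y l' ih =>
    simp at hh; subst hh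
    rcases List.mem_cons.mp hx with rfl | hx'
    · exact Relation.ReflTransGen.refl
    · cases l' with
      | nil => simp at hx'
      | cons z l'' =>
        have h1 := (List.isChain_cons_cons.mp hc).1
        have h2 := (List.isChain_cons_cons.mp hc).2
        exact Relation.ReflTransGen.head h1 (ih h2 rfl hx')

lemma mem_reach (h : P adj l a b) (hx : x ∈ l) : Relation.ReflTransGen adj a x :=
  chain'_reflTransGen h.1 h.2.1 hx

lemma reach (h : P adj l a b) : Relation.ReflTransGen adj a b :=
  mem_reach h (last_mem h)

lemma spliceEdge (h1 : P adj l r u) (huv : adj u v) (h2 : P adj m v t) :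
    P adj (l ++ m) r t := by
  refine ⟨?_, ?_, ?_⟩
  · refine List.isChain_append.mpr ⟨h1.1, h2.1, ?_⟩
    intro x hx y hy
    rw [h1.2.2] at hx; rw [h2.2.1] at hy
    simp at hx hy; subst hx; subst hy; exact huv
  · rw [List.head?_append_of_ne_nil _ (ne_nil h1)]; exact h1.2.1
  · rw [List.getLast?_append_of_ne_nil _ (ne_nil h2)]; exact h2.2.2

lemma splice (h1 : P adj l r u) (h2 : P adj m u t) : P adj (l ++ m.tail) r t := by
  cases m with
  | nil => exact absurd rfl (ne_nil h2)
  | cons y m' =>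
    have hy : u = y := by have := h2.2.1; simpa using this.symm
    subst hy
    cases m' with
    | nil =>
      have : u = t := by have := h2.2.2; simpa using this
      subst this; simpa using h1
    | cons z m'' =>
      have hc := List.isChain_cons_cons.mp h2.1
      have hlast : (z :: m'').getLast? = some t := by
        rw [← h2.2.2, List.getLast?_cons_cons]
      exact spliceEdge h1 hc.1 ⟨hc.2, rfl, hlast⟩

/-- successor extraction -/
lemma succ (h : P adj l a t) (hx : x ∈ l) (hxt : x ≠ t) :
    ∃ y s, adj x y ∧ P adj (y :: s) y t ∧ ∀ z ∈ y :: s, z ∈ l := by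
  obtain ⟨l₁, l₂, rfl⟩ := List.append_of_mem hx
  cases l₂ with
  | nil =>
    exfalso; apply hxt
    have := h.2.2
    rw [List.getLast?_append_of_ne_nil _ (by simp : [x] ≠ ([] : List V))] at this
    simpa using this
  | cons y s =>
    have hc := (List.isChain_append.mp h.1).2.1
    have hxy : adj x y := (List.isChain_cons_cons.mp hc).1
    have hlast : (y :: s).getLast? = some t := by
      have := h.2.2
      rwa [List.getLast?_append_of_ne_nil _ (by simp), List.getLast?_cons_cons] at this
    refine ⟨y, s, hxy, ⟨(List.isChain_cons_cons.mp hc).2, rfl, hlast⟩, ?_⟩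
    intro z hz; simp [hz]

/-- predecessor extraction -/
lemma pred (h : P adj l a t) (hx : x ∈ l) (hxa : x ≠ a) :
    ∃ p q, adj p x ∧ P adj q a p ∧ ∀ z ∈ q, z ∈ l := by
  obtain ⟨l₁, l₂, rfl⟩ := List.append_of_mem hx
  cases hl₁ : l₁ with
  | nil =>
    exfalso; subst hl₁
    have := h.2.1; simp at this; exact hxa this
  | cons w l₁' =>
    subst hl₁
    have hca := List.isChain_append.mp h.1
    have hne : (w :: l₁') ≠ ([] : List V) := by simp
    have hp : adj ((w :: l₁').getLast hne) x := by
      apply hca.2.2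
      · rw [List.getLast?_eq_getLast hne]; rfl
      · rfl
    refine ⟨(w :: l₁').getLast hne, w :: l₁', hp, ⟨hca.1, ?_, List.getLast?_eq_getLast hne⟩, ?_⟩
    · have := h.2.1
      rwa [List.head?_append_of_ne_nil _ hne] at this
    · intro z hz; simp at hz; simp [hz]; tauto

/-- prefix extraction -/
lemma prefixTo (h : P adj l a t) (hx : x ∈ l) :
    ∃ q, P adj q a x ∧ ∀ z ∈ q, z ∈ l := by
  by_cases hxa : x = a
  · subst hxa
    exact ⟨[x], ⟨List.isChain_singleton x, rfl, rfl⟩, by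
      intro z hz; simp at hz; subst hz; exact head_mem h⟩
  · obtain ⟨p, q, hpx, hq, hsub⟩ := pred h hx hxa
    refine ⟨q ++ [x], spliceEdge hq hpx (singleton x), ?_⟩
    intro z hz
    rcases List.mem_append.mp hz with h1 | h2
    · exact hsub z h1
    · simp at h2; subst h2; exact hx

lemma of_reflTransGen (h : Relation.ReflTransGen adj r v) : ∃ l, P adj l r v := by
  induction h with
  | refl => exact ⟨[r], singleton r⟩
  | tail h1 h2 ih =>
    obtain ⟨l, hl⟩ := ih
    exact ⟨l ++ [_], spliceEdge hl h2 (singleton _)⟩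

end PathAux

/-- In a binary nearly stable network, if `c` is a tree vertex that is a
parent of an unstable reticulation `a`, then the child of `c` other than `a`
is stable and is not a reticulation. -/
theorem other_child_of_parent_of_unstable_reticulation {V : Type*}
    (verts : Set V) (adj : V → V → Prop) (root : V)
    (hN : IsBinaryNetwork verts adj root) (hNS : NearlyStable verts adj root)
    (c a d : V) (hc : IsTreeVertex adj c)
    (ha : IsReticulation adj a) (hua : ¬ Stable verts adj root a)
    (hca : adj c a) (hcd : adj c d) (hda : d ≠ a) :
    Stable verts adj root d ∧ ¬ IsReticulation adj d := by
  classical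
  obtain ⟨hcin, hcout⟩ := hc
  obtain ⟨hain, haout⟩ := ha
  -- cycle helpers
  have hns : ∀ x : V, ¬ adj x x := fun x hx => hN.acyclic x (Relation.TransGen.single hx)
  have hcyc : ∀ x y : V, Relation.ReflTransGen adj x y → adj y x → False :=
    fun x y h1 h2 => hN.acyclic x (Relation.TransGen.tail' h1 h2)
  have hcyc3 : ∀ x y z : V, Relation.ReflTransGen adj x y → adj y z → adj z x → False :=
    fun x y z h1 h2 h3 => hN.acyclic x (Relation.TransGen.tail (Relation.TransGen.tail' h1 h2) h3)
  -- children of c are exactly a and d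
  have hadne : a ≠ d := fun h => hda h.symm
  have hchild : ∀ y, adj c y → y = a ∨ y = d := by
    have hfinS : {u : V | adj c u}.Finite :=
      hN.finite_verts.subset (fun u hu => (hN.adj_mem hu).2)
    have hsub : ({a, d} : Set V) ⊆ {u : V | adj c u} := by
      intro u hu
      simp only [Set.mem_insert_iff, Set.mem_singleton_iff] at hu
      rcases hu with rfl | rfl
      · exact hca
      · exact hcd
    have hout' : {u : V | adj c u}.ncard = 2 := hcout
    have heq := Set.eq_of_subset_of_ncard_le hsub
      (by rw [hout', Set.ncard_pair hadne]) hfinS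
    intro y hy
    have : y ∈ ({a, d} : Set V) := by rw [heq]; exact hy
    simpa using this
  -- the unique child b of a
  have haout' : {u : V | adj a u}.ncard = 1 := haout
  obtain ⟨b, hbeq⟩ := Set.ncard_eq_one.mp haout'
  have hab : adj a b := by
    have : b ∈ {u : V | adj a u} := by rw [hbeq]; rfl
    exact this
  have hchild_a : ∀ y, adj a y → y = b := by
    intro y hy
    have : y ∈ ({b} : Set V) := by rw [← hbeq]; exact hy
    simpa using this
  -- the other parent c' of a
  have hain' : {u : V | adj u a}.ncard = 2 := hain
  obtain ⟨x0, y0, hxy0, hPa⟩ := Set.ncard_eq_two.mp hain'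
  obtain ⟨c', hc'a, hc'c⟩ : ∃ c', adj c' a ∧ c' ≠ c := by
    have hcmem : c ∈ {u : V | adj u a} := hca
    rw [hPa] at hcmem
    simp only [Set.mem_insert_iff, Set.mem_singleton_iff] at hcmem
    rcases hcmem with rfl | rfl
    · refine ⟨y0, ?_, fun h => hxy0 h.symm⟩
      have : y0 ∈ {u : V | adj u a} := by rw [hPa]; simp
      exact this
    · refine ⟨x0, ?_, fun h => hxy0 h⟩
      have : x0 ∈ {u : V | adj u a} := by rw [hPa]; simp
      exact this
  -- stability facts from near stability
  have haV : a ∈ verts := (hN.adj_mem hca).2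
  have hstab_par : ∀ p, adj p a → Stable verts adj root p :=
    (hNS a haV).resolve_left hua
  have hc_st : Stable verts adj root c := hstab_par c hca
  have hc'_st : Stable verts adj root c' := hstab_par c' hc'a
  have hbV : b ∈ verts := (hN.adj_mem hab).2
  have hb_st : Stable verts adj root b := by
    rcases hNS b hbV with h | h
    · exact h
    · exact absurd (h a hab) hua
  obtain ⟨ℓ, hℓleaf, hℓdom⟩ := hc_st
  -- distinctness
  have hcla : c ≠ a := fun h => hns a (h ▸ hca)
  have hcld : c ≠ d := fun h => hns d (h ▸ hcd)
  have hcc' : c ≠ c' := fun h => hc'c h.symm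
  have hclℓ : c ≠ ℓ := by
    intro h
    rw [h, hℓleaf.2] at hcout
    omega
  have halℓ : a ≠ ℓ := by
    intro h
    rw [h, hℓleaf.2] at haout
    omega
  -- extracting an avoiding path from instability
  have havoid : ∀ x, ¬ Stable verts adj root x → ∀ ℓ₀, IsLeaf verts adj ℓ₀ →
      ∃ l, IsPathFromTo adj l root ℓ₀ ∧ x ∉ l := by
    intro x hx ℓ₀ hℓ₀
    by_contra h
    push_neg at h
    exact hx ⟨ℓ₀, hℓ₀, h⟩
  -- Q : a path root → ℓ avoiding a; its suffix Qs from d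
  obtain ⟨Q, hQ, haQ⟩ := havoid a hua ℓ hℓleaf
  have hcQ : c ∈ Q := hℓdom Q hQ
  obtain ⟨y, s, hcy, hys, hsubQ⟩ := PathAux.succ hQ hcQ hclℓ
  have hyd : y = d := by
    rcases hchild y hcy with h | h
    · refine absurd ?_ haQ
      have := hsubQ y (List.mem_cons_self)
      rwa [h] at this
    · exact h
  rw [hyd] at hys hsubQ
  have hQs : IsPathFromTo adj (d :: s) d ℓ := hys
  have haQs : a ∉ d :: s := fun h => haQ (hsubQ a h)
  have hcQs : c ∉ d :: s := fun h => hcyc d c (PathAux.mem_reach hQs h) hcd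
  -- Part 1 : d is stable
  have hd_st : Stable verts adj root d := by
    by_cases hWa : ∃ W, IsPathFromTo adj W a ℓ
    · by_contra hd_un
      by_cases hc'd : c' = d
      · exact hd_un (hc'd ▸ hc'_st)
      obtain ⟨W, hW⟩ := hWa
      have hcW : c ∉ W := fun h => hcyc a c (PathAux.mem_reach hW h) hca
      have hall : ∀ Pc, IsPathFromTo adj Pc root c' → d ∈ Pc := by
        intro Pc hPc
        have comb := PathAux.spliceEdge hPc hc'a hW
        have hccomb := hℓdom _ comb
        have hcP : c ∈ Pc := by
          rcases List.mem_append.mp hccomb with h | h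
          · exact h
          · exact absurd h hcW
        obtain ⟨y, s', hcy', hys', hsub'⟩ := PathAux.succ hPc hcP hcc'
        rcases hchild y hcy' with h | h
        · rw [h] at hys'
          exact (hcyc a c' (PathAux.reach hys') hc'a).elim
        · have := hsub' y (List.mem_cons_self)
          rwa [h] at this
      obtain ⟨ℓ', hℓ'leaf, hℓ'dom⟩ := hc'_st
      obtain ⟨T, hT, hdT⟩ := havoid d hd_un ℓ' hℓ'leaf
      have hc'T : c' ∈ T := hℓ'dom T hT
      obtain ⟨q, hq, hqsub⟩ := PathAux.prefixTo hT hc'T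
      exact hdT (hqsub d (hall q hq))
    · refine ⟨ℓ, hℓleaf, ?_⟩
      intro P hP
      have hcP := hℓdom P hP
      obtain ⟨y, s', hcy', hys', hsub'⟩ := PathAux.succ hP hcP hclℓ
      rcases hchild y hcy' with h | h
      · rw [h] at hys'
        exact absurd ⟨_, hys'⟩ hWa
      · have := hsub' y (List.mem_cons_self)
        rwa [h] at this
  -- Part 2 : d is not a reticulation
  have hd_nr : ¬ IsReticulation adj d := by
    rintro ⟨hdin, hdout⟩
    have hdin' : {u : V | adj u d}.ncard = 2 := hdin
    obtain ⟨x1, y1, hxy1, hPd⟩ := Set.ncard_eq_two.mp hdin'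
    obtain ⟨e, hed, hec⟩ : ∃ e, adj e d ∧ e ≠ c := by
      have hdc : c ∈ {u : V | adj u d} := hcd
      rw [hPd] at hdc
      simp only [Set.mem_insert_iff, Set.mem_singleton_iff] at hdc
      rcases hdc with rfl | rfl
      · refine ⟨y1, ?_, fun h => hxy1 h.symm⟩
        have : y1 ∈ {u : V | adj u d} := by rw [hPd]; simp
        exact this
      · refine ⟨x1, ?_, fun h => hxy1 h⟩
        have : x1 ∈ {u : V | adj u d} := by rw [hPd]; simp
        exact this
    by_cases hea : e = a
    · -- triangle case : a is also a parent of d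
      rw [hea] at hed
      -- a path A : root → c' avoiding c
      obtain ⟨A, hA, hcA⟩ : ∃ A, IsPathFromTo adj A root c' ∧ c ∉ A := by
        by_contra h
        push_neg at h
        obtain ⟨P0, hP0⟩ := PathAux.of_reflTransGen (hN.reach c' (hN.adj_mem hc'a).1)
        have hcP0 : c ∈ P0 := h P0 hP0
        obtain ⟨y, s0, hcy0, hys0, _⟩ := PathAux.succ hP0 hcP0 hcc'
        rcases hchild y hcy0 with h | h
        · rw [h] at hys0
          exact hcyc a c' (PathAux.reach hys0) hc'a
        · rw [h] at hys0
          exact hcyc3 d c' a (PathAux.reach hys0) hc'a hed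
      -- a path W1 : d → ℓ
      obtain ⟨P1, hP1⟩ := PathAux.of_reflTransGen (hN.reach ℓ hℓleaf.1)
      have hcP1 := hℓdom P1 hP1
      obtain ⟨y, s1, hcy1, hys1, _⟩ := PathAux.succ hP1 hcP1 hclℓ
      obtain ⟨W1, hW1⟩ : ∃ W1, IsPathFromTo adj W1 d ℓ := by
        rcases hchild y hcy1 with h | h
        · rw [h] at hys1
          obtain ⟨y2, s2, hay2, hy2s, _⟩ :=
            PathAux.succ hys1 (List.mem_cons_self) halℓ
          have h1 : y2 = b := hchild_a _ hay2
          have h2 : d = b := hchild_a _ hed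
          exact ⟨y2 :: s2, by rw [h2, ← h1]; exact hy2s⟩
        · rw [h] at hys1
          exact ⟨d :: s1, hys1⟩
      have hcW1 : c ∉ W1 := fun h => hcyc d c (PathAux.mem_reach hW1 h) hcd
      have p1 := PathAux.spliceEdge hA hc'a (PathAux.singleton a)
      have p2 := PathAux.spliceEdge p1 hed (PathAux.singleton d)
      have p3 := PathAux.splice p2 hW1
      have hc3 := hℓdom _ p3
      rcases List.mem_append.mp hc3 with h | h
      · rcases List.mem_append.mp h with h' | h'
        · rcases List.mem_append.mp h' with h'' | h''
          · exact hcA h''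
          · simp at h''; exact hcla h''
        · simp at h'; exact hcld h'
      · exact hcW1 (List.mem_of_mem_tail h)
    · -- general case : e ≠ a
      have h7 : ∀ Pe, IsPathFromTo adj Pe root e → a ∈ Pe := by
        intro Pe hPe
        have comb := PathAux.spliceEdge hPe hed hQs
        have hccomb := hℓdom _ comb
        have hcPe : c ∈ Pe := by
          rcases List.mem_append.mp hccomb with h | h
          · exact h
          · exact absurd h hcQs
        obtain ⟨y, s2, hcy2, hys2, hsub2⟩ := PathAux.succ hPe hcPe (fun h => hec h.symm)
        rcases hchild y hcy2 with h | h
        · have := hsub2 y (List.mem_cons_self)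
          rwa [h] at this
        · rw [h] at hys2
          exact (hcyc d e (PathAux.reach hys2) hed).elim
      obtain ⟨P0, hP0⟩ := PathAux.of_reflTransGen (hN.reach e (hN.adj_mem hed).1)
      have haP0 := h7 P0 hP0
      obtain ⟨y, s3, hay3, hys3, _⟩ := PathAux.succ hP0 haP0 (fun h => hea h.symm)
      have hyb : y = b := hchild_a _ hay3
      rw [hyb] at hys3
      have haseg : a ∉ b :: s3 := fun h => hcyc b a (PathAux.mem_reach hys3 h) hab
      obtain ⟨ℓb, hℓbleaf, hℓbdom⟩ := hb_st
      obtain ⟨S, hS, haS⟩ := havoid a hua ℓb hℓbleaf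
      have hbS : b ∈ S := hℓbdom S hS
      have hbroot : b ≠ root := by
        intro h
        have hfinp : {u : V | adj u root}.Finite :=
          hN.finite_verts.subset (fun u hu => (hN.adj_mem hu).1)
        have hin0 : {u : V | adj u root}.ncard = 0 := hN.root_indeg
        have hemp : {u : V | adj u root} = ∅ := (Set.ncard_eq_zero hfinp).mp hin0
        have hmem : a ∈ {u : V | adj u root} := h ▸ hab
        rw [hemp] at hmem
        exact hmem
      obtain ⟨f, q, hfb, hq, hqsub⟩ := PathAux.pred hS hbS hbroot
      have haq : a ∉ q := fun h => haS (hqsub a h)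
      have CP := PathAux.spliceEdge hq hfb hys3
      have hfin := h7 _ CP
      rcases List.mem_append.mp hfin with h | h
      · exact haq h
      · exact haseg h
  exact ⟨hd_st, hd_nr⟩
end

section
/- For every binary nearly stable network N, the number of unstable reticulations of N is at most twice the number of stable reticulations of N, i.e., U_ret(N) ≤ 2·S_ret(N). (Lemma 3) -/
/-- Auxiliary: membership from `getLast?`. -/
lemma aux_mem_of_getLast? {α : Type*} : ∀ {l : List α} {a : α}, l.getLast? = some a → a ∈ l
  | [], _, h => by simp at h
  | [x], a, h => by
      simp only [List.getLast?_singleton, Option.some.injEq] at h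
      simp [h]
  | x :: y :: t, a, h => by
      rw [List.getLast?_cons_cons] at h
      exact List.mem_cons_of_mem _ (aux_mem_of_getLast? h)

/-- Auxiliary: every element of the tail of a chain has a predecessor in the list. -/
lemma aux_exists_pred {V : Type*} {adj : V → V → Prop} :
    ∀ {l : List V} {w : V}, l.Chain' adj → w ∈ l.tail → ∃ p ∈ l, adj p w
  | [], _, _, hw => absurd hw List.not_mem_nil
  | [_], _, _, hw => absurd hw List.not_mem_nil
  | a :: b :: t, w, hc, hw => by
      rw [show List.Chain' adj (a :: b :: t) ↔ _ from List.isChain_cons_cons] at hc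
      rcases List.mem_cons.mp hw with rfl | hw'
      · exact ⟨a, List.mem_cons_self, hc.1⟩
      · obtain ⟨p, hp, hpw⟩ := aux_exists_pred hc.2 hw'
        exact ⟨p, List.mem_cons_of_mem _ hp, hpw⟩

/-- Auxiliary: if `w` is stable and has `r` as its unique parent, then `r` is stable. -/
lemma aux_stable_of_child {V : Type*} {verts : Set V} {adj : V → V → Prop} {root : V}
    (hN : IsBinaryNetwork verts adj root) {r w : V} (hrw : adj r w)
    (hin : indeg adj w = 1) (hw : Stable verts adj root w) :
    Stable verts adj root r := by
  obtain ⟨ℓ, hℓ, hall⟩ := hw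
  refine ⟨ℓ, hℓ, fun l hl => ?_⟩
  have hwl := hall l hl
  obtain ⟨hc, hh, _⟩ := hl
  cases l with
  | nil => simp at hh
  | cons a t =>
    have ha : a = root := by simpa using hh
    have hwroot : w ≠ a := by
      intro h
      rw [h, ha, hN.root_indeg] at hin
      omega
    have hwt : w ∈ t := by
      rcases List.mem_cons.mp hwl with h | h
      · exact absurd h hwroot
      · exact h
    obtain ⟨p, hp, hpw⟩ := aux_exists_pred hc hwt
    obtain ⟨x, hx⟩ := Set.ncard_eq_one.mp hin
    have hr : r = x := by
      have : r ∈ ({x} : Set V) := hx ▸ hrw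
      simpa using this
    have hpx : p = x := by
      have : p ∈ ({x} : Set V) := hx ▸ hpw
      simpa using this
    rw [hr, ← hpx]
    exact hp

/-- Auxiliary key lemma: in a nearly stable binary network, the unique child of
an unstable reticulation is a stable reticulation. -/
lemma aux_key {V : Type*} {verts : Set V} {adj : V → V → Prop} {root : V}
    (hN : IsBinaryNetwork verts adj root) (hNS : NearlyStable verts adj root)
    {r : V} (hr : IsReticulation adj r) (hur : ¬ Stable verts adj root r) :
    ∃ w, adj r w ∧ IsReticulation adj w ∧ Stable verts adj root w := by
  obtain ⟨w, hw⟩ := Set.ncard_eq_one.mp hr.2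
  have hrw : adj r w := by
    have : w ∈ {u | adj r u} := hw ▸ rfl
    exact this
  have hwv : w ∈ verts := (hN.adj_mem hrw).2
  have hws : Stable verts adj root w := by
    rcases hNS w hwv with h | h
    · exact h
    · exact absurd (h r hrw) hur
  have hne1 : indeg adj w ≠ 1 := fun h1 => hur (aux_stable_of_child hN hrw h1 hws)
  have hinpos : indeg adj w ≠ 0 := by
    have hfin : {u | adj u w}.Finite :=
      hN.finite_verts.subset (fun u hu => (hN.adj_mem hu).1)
    have : 0 < indeg adj w := (Set.ncard_pos hfin).mpr ⟨r, hrw⟩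
    omega
  have hwroot : w ≠ root := fun h => hinpos (h ▸ hN.root_indeg)
  have hout : outdeg adj w ≠ 0 := fun h0 => hne1 (hN.leaf_indeg w hwv h0)
  rcases hN.internal_deg w hwv hwroot hout with ht | hret
  · exact absurd ht.1 hne1
  · exact ⟨w, hrw, hret, hws⟩

/-- Auxiliary: every reticulation is a vertex of the network. -/
lemma aux_ret_mem {V : Type*} {verts : Set V} {adj : V → V → Prop} {root : V}
    (hN : IsBinaryNetwork verts adj root) {v : V} (hv : IsReticulation adj v) :
    v ∈ verts := by
  obtain ⟨w, hw⟩ := Set.ncard_eq_one.mp hv.2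
  have : w ∈ {u | adj v u} := hw ▸ rfl
  exact (hN.adj_mem this).1

/-- Lemma 3: in a binary nearly stable network,
`U_ret(N) ≤ 2 * S_ret(N)`. -/
theorem unstable_le_two_mul_stable {V : Type*} (verts : Set V)
    (adj : V → V → Prop) (root : V) (hN : IsBinaryNetwork verts adj root)
    (hNS : NearlyStable verts adj root) :
    {v : V | IsReticulation adj v ∧ ¬ Stable verts adj root v}.ncard ≤
      2 * {v : V | IsReticulation adj v ∧ Stable verts adj root v}.ncard := by
  classical
  set Ur : Set V := {v | IsReticulation adj v ∧ ¬ Stable verts adj root v} with hUr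
  set Sr : Set V := {v | IsReticulation adj v ∧ Stable verts adj root v} with hSr
  have hUfin : Ur.Finite := hN.finite_verts.subset (fun v hv => aux_ret_mem hN hv.1)
  have hSfin : Sr.Finite := hN.finite_verts.subset (fun v hv => aux_ret_mem hN hv.1)
  have hkey : ∀ r ∈ Ur, ∃ w, adj r w ∧ w ∈ Sr := by
    intro r hr
    obtain ⟨w, h1, h2, h3⟩ := aux_key hN hNS hr.1 hr.2
    exact ⟨w, h1, h2, h3⟩
  set f : V → V := fun r => if h : ∃ w, adj r w ∧ w ∈ Sr then h.choose else r with hf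
  have hfspec : ∀ r ∈ Ur, adj r (f r) ∧ f r ∈ Sr := by
    intro r hr
    have h := hkey r hr
    simp only [hf, dif_pos h]
    exact h.choose_spec
  rw [Set.ncard_eq_toFinset_card _ hUfin, Set.ncard_eq_toFinset_card _ hSfin]
  refine Finset.card_le_mul_card_image_of_maps_to (f := f) ?_ 2 ?_
  · intro a ha
    rw [Set.Finite.mem_toFinset] at ha ⊢
    exact (hfspec a ha).2
  · intro b hb
    rw [Set.Finite.mem_toFinset] at hb
    have hparfin : {u | adj u b}.Finite :=
      hN.finite_verts.subset (fun u hu => (hN.adj_mem hu).1)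
    have hsub : ↑(hUfin.toFinset.filter (fun x => f x = b)) ⊆ {u | adj u b} := by
      intro a ha
      simp only [Finset.coe_filter, Set.Finite.mem_toFinset, Set.mem_setOf_eq] at ha
      obtain ⟨haU, hab⟩ := ha
      have := (hfspec a haU).1
      rwa [hab] at this
    calc (hUfin.toFinset.filter (fun x => f x = b)).card
        = (↑(hUfin.toFinset.filter (fun x => f x = b)) : Set V).ncard := by
          rw [Set.ncard_coe_finset]
      _ ≤ {u | adj u b}.ncard := Set.ncard_le_ncard hsub hparfin
      _ = 2 := hb.1.1
end

section
/- Let N be a binary nearly stable network with the subphylogeny-free property, and let P be a directed path from the root to a leaf ℓ having the maximum number of vertices among all directed root-to-leaf paths of N, with P containing at least four vertices. Then the parent of ℓ (the vertex preceding ℓ on P) is a reticulation. (First step of Lemma 4) -/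
/-- Auxiliary: a chain gives a refl-trans-gen path to the default last. -/
lemma chain_reflTransGen_getLastD {V : Type*} {r : V → V → Prop} :
    ∀ (l : List V) (a : V), List.Chain r a l → Relation.ReflTransGen r a (l.getLastD a)
  | [], a, _ => Relation.ReflTransGen.refl
  | b :: t, a, h => by
    replace h := List.isChain_cons_cons.mp h
    have ih := chain_reflTransGen_getLastD t b h.2
    rw [List.getLastD_cons]
    exact (Relation.ReflTransGen.single h.1).trans ih

/-- Auxiliary: a chain' of length ≥ 2 gives a trans-gen from head to last. -/
lemma chain'_transGen {V : Type*} {r : V → V → Prop} {l : List V} {a b : V}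
    (hc : l.Chain' r) (ha : l.head? = some a) (hb : l.getLast? = some b)
    (hl : 2 ≤ l.length) : Relation.TransGen r a b := by
  match l, hl with
  | x :: y :: t, _ =>
    have hax : x = a := by simpa using ha
    have hc' : List.Chain r x (y :: t) := hc
    replace hc' := List.isChain_cons_cons.mp hc'
    have hrtg := chain_reflTransGen_getLastD t y hc'.2
    have hb' : t.getLastD y = b := by
      have h2 : (x :: y :: t).getLast? = some (t.getLastD y) := by
        simp [List.getLast?_cons]
      rw [h2] at hb
      exact Option.some.inj hb
    exact hax ▸ Relation.TransGen.head' hc'.1 (hb' ▸ hrtg)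

/-- Auxiliary: every vertex has a directed path to some leaf. -/
lemma exists_path_to_leaf {V : Type*} (verts : Set V) (adj : V → V → Prop)
    (hfin : verts.Finite)
    (hadj : ∀ ⦃u w : V⦄, adj u w → u ∈ verts ∧ w ∈ verts)
    (hacyc : ∀ w : V, ¬ Relation.TransGen adj w w) :
    ∀ (n : ℕ) (x : V), x ∈ verts → {u | Relation.ReflTransGen adj x u}.ncard ≤ n →
      ∃ ℓ L, IsLeaf verts adj ℓ ∧ IsPathFromTo adj L x ℓ := by
  intro n
  induction n with
  | zero =>
    intro x hx hcard
    exfalso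
    have hsub : {u | Relation.ReflTransGen adj x u} ⊆ verts := by
      intro u hu
      induction hu with
      | refl => exact hx
      | tail _ h _ => exact (hadj h).2
    have hxm : x ∈ {u | Relation.ReflTransGen adj x u} := Relation.ReflTransGen.refl
    have := (Set.ncard_pos (hfin.subset hsub)).mpr ⟨x, hxm⟩
    omega
  | succ n ih =>
    intro x hx hcard
    by_cases hout : outdeg adj x = 0
    · exact ⟨x, [x], ⟨hx, hout⟩, by simp [IsPathFromTo, List.Chain', List.isChain_singleton]⟩
    · obtain ⟨y, hy⟩ : {u | adj x u}.Nonempty := Set.nonempty_of_ncard_ne_zero hout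
      have hy' : adj x y := hy
      have hyv : y ∈ verts := (hadj hy').2
      have hsub : {u | Relation.ReflTransGen adj x u} ⊆ verts := by
        intro u hu
        induction hu with
        | refl => exact hx
        | tail _ h _ => exact (hadj h).2
      have hsubD : {u | Relation.ReflTransGen adj y u} ⊆ {u | Relation.ReflTransGen adj x u} :=
        fun u hu => (Relation.ReflTransGen.single hy').trans hu
      have hxnot : x ∉ {u | Relation.ReflTransGen adj y u} :=
        fun h => hacyc x (Relation.TransGen.head' hy' h)
      have hss : {u | Relation.ReflTransGen adj y u} ⊂ {u | Relation.ReflTransGen adj x u} :=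
        ⟨hsubD, fun h => hxnot (h Relation.ReflTransGen.refl)⟩
      have hlt := Set.ncard_lt_ncard hss (hfin.subset hsub)
      obtain ⟨ℓ, L, hleaf, hLc, hLh, hLl⟩ := ih y hyv (by omega)
      match L, hLh with
      | z :: L', hLh =>
        simp at hLh; subst hLh
        refine ⟨ℓ, x :: z :: L', hleaf, List.isChain_cons_cons.mpr ⟨hy', hLc⟩, rfl, ?_⟩
        simpa using hLl

/-- First step of Lemma 4: in a binary nearly stable network with the
subphylogeny-free property, if `P` is a root-to-leaf directed path with the
maximum number of vertices among all root-to-leaf paths and `P` has at least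
four vertices, then the parent of the leaf end `ℓ` of `P` (the vertex
preceding `ℓ` on `P`) is a reticulation. -/
theorem parent_of_leaf_end_of_longest_path_is_reticulation {V : Type*}
    (verts : Set V) (adj : V → V → Prop) (root : V)
    (hN : IsBinaryNetwork verts adj root) (hNS : NearlyStable verts adj root)
    (hSPF : ∀ x c₁ c₂ : V, adj x c₁ → adj x c₂ → c₁ ≠ c₂ →
      ¬ (IsLeaf verts adj c₁ ∧ IsLeaf verts adj c₂))
    (P : List V) (ℓ : V) (hℓ : IsLeaf verts adj ℓ)
    (hP : IsPathFromTo adj P root ℓ)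
    (hmax : ∀ (ℓ' : V) (Q : List V), IsLeaf verts adj ℓ' →
      IsPathFromTo adj Q root ℓ' → Q.length ≤ P.length)
    (hlen : 4 ≤ P.length)
    (v : V) (hv : adj v ℓ) :
    IsReticulation adj v := by
  obtain ⟨hPc, hPh, hPl⟩ := hP
  have hfin := hN.finite_verts
  have hvverts : v ∈ verts := (hN.adj_mem hv).1
  have hsubout : {u | adj v u} ⊆ verts := fun u hu => (hN.adj_mem hu).2
  have houtpos : outdeg adj v ≠ 0 := by
    intro h
    have he := (Set.ncard_eq_zero (hfin.subset hsubout)).mp h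
    exact absurd hv (by rw [Set.eq_empty_iff_forall_notMem] at he; exact he ℓ)
  -- decompose P as Q ++ [ℓ]
  have hPne : P ≠ [] := by intro h; subst h; simp at hlen
  have hlast : P.getLast hPne = ℓ := by
    have := List.getLast?_eq_getLast hPne
    rw [this] at hPl
    exact Option.some.inj hPl
  have hPdecomp : P = P.dropLast ++ [ℓ] := by
    conv_lhs => rw [← List.dropLast_append_getLast hPne, hlast]
  set Q := P.dropLast with hQdef
  have hQlen : Q.length = P.length - 1 := by simp [hQdef]
  have hQne : Q ≠ [] := by
    intro h
    rw [h] at hQlen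
    simp at hQlen
    omega
  have hchain := List.isChain_append.mp (hPdecomp ▸ hPc)
  obtain ⟨hQc, -, hrel⟩ := hchain
  have hQlast : Q.getLast? = some (Q.getLast hQne) := List.getLast?_eq_getLast hQne
  have hwℓ : adj (Q.getLast hQne) ℓ := hrel _ hQlast ℓ rfl
  -- the penultimate vertex equals v, since ℓ has indegree 1
  have hindeg : indeg adj ℓ = 1 := hN.leaf_indeg ℓ hℓ.1 hℓ.2
  obtain ⟨a, ha⟩ := Set.ncard_eq_one.mp hindeg
  have hwv : Q.getLast hQne = v := by
    have h1 : Q.getLast hQne ∈ ({a} : Set V) := ha ▸ hwℓ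
    have h2 : v ∈ ({a} : Set V) := ha ▸ hv
    simp at h1 h2
    rw [h1, h2]
  have hQhead : Q.head? = some root := by
    rw [hPdecomp] at hPh
    match Q, hQne with
    | q :: Q', _ => simpa using hPh
  -- v is not the root
  have hvroot : v ≠ root := by
    intro h
    apply hN.acyclic root
    refine chain'_transGen hQc hQhead (by rw [hQlast, hwv, h]) ?_
    omega
  rcases hN.internal_deg v hvverts hvroot houtpos with htv | hret
  · -- tree vertex case: derive a contradiction with maximality
    exfalso
    obtain ⟨a', b', hab, hset⟩ := Set.ncard_eq_two.mp htv.2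
    have hℓmem : ℓ ∈ ({a', b'} : Set V) := hset ▸ hv
    obtain ⟨c, hvc, hcℓ⟩ : ∃ c, adj v c ∧ c ≠ ℓ := by
      have hb'mem : adj v b' := by
        have : b' ∈ {u | adj v u} := by rw [hset]; simp
        exact this
      have ha'mem : adj v a' := by
        have : a' ∈ {u | adj v u} := by rw [hset]; simp
        exact this
      rcases hℓmem with h | h
      · exact ⟨b', hb'mem, by rw [← h] at hab; exact fun e => hab e.symm⟩
      · exact ⟨a', ha'mem, by rw [← h] at hab; exact hab⟩
    have hcverts : c ∈ verts := (hN.adj_mem hvc).2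
    have hcnotleaf : ¬ IsLeaf verts adj c := fun hcl =>
      hSPF v ℓ c hv hvc (fun e => hcℓ e.symm) ⟨hℓ, hcl⟩
    have hcout : outdeg adj c ≠ 0 := fun h => hcnotleaf ⟨hcverts, h⟩
    obtain ⟨ℓ', L, hleaf', hLc, hLh, hLl⟩ :=
      exists_path_to_leaf verts adj hfin hN.adj_mem hN.acyclic
        ({u | Relation.ReflTransGen adj c u}.ncard) c hcverts le_rfl
    have hLne : L ≠ [] := by intro h; rw [h] at hLh; simp at hLh
    have hLlen : 2 ≤ L.length := by
      match L, hLne with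
      | [x], _ =>
        exfalso
        simp at hLh hLl
        rw [hLh] at hLl
        exact hcnotleaf (hLl ▸ hleaf')
      | x :: y :: t, _ => simp
    have hRpath : IsPathFromTo adj (Q ++ L) root ℓ' := by
      refine ⟨List.isChain_append.mpr ⟨hQc, hLc, ?_⟩, ?_, ?_⟩
      · intro x hx y hy
        simp only [hQlast, Option.mem_def, Option.some.injEq] at hx
        simp only [hLh, Option.mem_def, Option.some.injEq] at hy
        subst hx; subst hy
        rw [hwv]; exact hvc
      · match Q, hQne, hQhead with
        | q :: Q', _, hQhead => simpa using hQhead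
      · rw [List.getLast?_append, hLl]; rfl
    have := hmax ℓ' (Q ++ L) hleaf' hRpath
    rw [List.length_append] at this
    omega
  · exact hret
end
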